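/- arXiv:math/0511078 — 4 statements merged into one kernel-verified Lean document; each statement's English description precedes it below -/
import Mathlib

section
/- Let (Ω, F, P) be a probability space and let A and B be sub-σ-fields of F with ψ*(A,B) < ∞. Then I(A,B) ≤ ψ*(A,B)·log ψ*(A,B). -/
open MeasureTheory ProbabilityTheory ENNReal Filter

noncomputable section

namespace StrongMixing

variable {Ω : Type*}

/-- The strong mixing (α) dependence coefficient between two sub-σ-fields. -/
def alphaDep {mΩ : MeasurableSpace Ω} (P : Measure Ω) (𝒜 𝒝 : MeasurableSpace Ω) : ℝ≥0∞ :=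
  ⨆ (A : Set Ω) (_ : MeasurableSet[𝒜] A) (B : Set Ω) (_ : MeasurableSet[𝒝] B),
    ENNReal.ofReal |(P (A ∩ B)).toReal - (P A).toReal * (P B).toReal|

/-- The uniform mixing (φ) dependence coefficient between two sub-σ-fields. -/
def phiDep {mΩ : MeasurableSpace Ω} (P : Measure Ω) (𝒜 𝒝 : MeasurableSpace Ω) : ℝ≥0∞ :=
  ⨆ (A : Set Ω) (_ : MeasurableSet[𝒜] A) (_ : 0 < P A) (B : Set Ω) (_ : MeasurableSet[𝒝] B),
    ENNReal.ofReal |(P (A ∩ B)).toReal / (P A).toReal - (P B).toReal|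

/-- The ψ dependence coefficient between two sub-σ-fields. -/
def psiDep {mΩ : MeasurableSpace Ω} (P : Measure Ω) (𝒜 𝒝 : MeasurableSpace Ω) : ℝ≥0∞ :=
  ⨆ (A : Set Ω) (_ : MeasurableSet[𝒜] A) (_ : 0 < P A)
    (B : Set Ω) (_ : MeasurableSet[𝒝] B) (_ : 0 < P B),
    ENNReal.ofReal |(P (A ∩ B)).toReal / ((P A).toReal * (P B).toReal) - 1|

/-- The ψ* dependence coefficient between two sub-σ-fields. -/
def psiStarDep {mΩ : MeasurableSpace Ω} (P : Measure Ω) (𝒜 𝒝 : MeasurableSpace Ω) : ℝ≥0∞ :=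
  ⨆ (A : Set Ω) (_ : MeasurableSet[𝒜] A) (_ : 0 < P A)
    (B : Set Ω) (_ : MeasurableSet[𝒝] B) (_ : 0 < P B),
    ENNReal.ofReal ((P (A ∩ B)).toReal / ((P A).toReal * (P B).toReal))

/-- The ψ' dependence coefficient between two sub-σ-fields (an infimum). -/
def psiPrimeDep {mΩ : MeasurableSpace Ω} (P : Measure Ω) (𝒜 𝒝 : MeasurableSpace Ω) : ℝ≥0∞ :=
  ⨅ (A : Set Ω) (_ : MeasurableSet[𝒜] A) (_ : 0 < P A)
    (B : Set Ω) (_ : MeasurableSet[𝒝] B) (_ : 0 < P B),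
    ENNReal.ofReal ((P (A ∩ B)).toReal / ((P A).toReal * (P B).toReal))

/-- `A : Fin I → Set Ω` is a finite measurable partition of `Ω` with pieces in `m`. -/
def IsPartition {I : ℕ} (m : MeasurableSpace Ω) (A : Fin I → Set Ω) : Prop :=
  (∀ i, MeasurableSet[m] (A i)) ∧ Pairwise (Function.onFun Disjoint A) ∧ (⋃ i, A i) = Set.univ

/-- The absolute regularity (β) dependence coefficient between two sub-σ-fields. -/
def betaDep {mΩ : MeasurableSpace Ω} (P : Measure Ω) (𝒜 𝒝 : MeasurableSpace Ω) : ℝ≥0∞ :=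
  ⨆ (I : ℕ) (J : ℕ) (A : Fin I → Set Ω) (B : Fin J → Set Ω)
    (_ : IsPartition 𝒜 A) (_ : IsPartition 𝒝 B),
    ENNReal.ofReal ((1 / 2) * ∑ i, ∑ j,
      |(P (A i ∩ B j)).toReal - (P (A i)).toReal * (P (B j)).toReal|)

/-- The coefficient of information `I(𝒜,𝒝)` between two sub-σ-fields. -/
def infoDep {mΩ : MeasurableSpace Ω} (P : Measure Ω) (𝒜 𝒝 : MeasurableSpace Ω) : ℝ≥0∞ :=
  ⨆ (I : ℕ) (J : ℕ) (A : Fin I → Set Ω) (B : Fin J → Set Ω)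
    (_ : IsPartition 𝒜 A) (_ : IsPartition 𝒝 B),
    ENNReal.ofReal (∑ i, ∑ j, (P (A i ∩ B j)).toReal *
      Real.log ((P (A i ∩ B j)).toReal / ((P (A i)).toReal * (P (B j)).toReal)))

/-- Covariance of two real random variables (defined via centered integrals). -/
def covP {mΩ : MeasurableSpace Ω} (P : Measure Ω) (f g : Ω → ℝ) : ℝ :=
  ∫ ω, (f ω - ∫ x, f x ∂P) * (g ω - ∫ x, g x ∂P) ∂P

/-- Variance of a real random variable. -/
def varP {mΩ : MeasurableSpace Ω} (P : Measure Ω) (f : Ω → ℝ) : ℝ := covP P f f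

/-- The maximal correlation (ρ) dependence coefficient between two sub-σ-fields. -/
def rhoDep {mΩ : MeasurableSpace Ω} (P : Measure Ω) (𝒜 𝒝 : MeasurableSpace Ω) : ℝ≥0∞ :=
  ⨆ (f : Ω → ℝ) (g : Ω → ℝ)
    (_ : Measurable[𝒜] f) (_ : Measurable[𝒝] g)
    (_ : MemLp f 2 P) (_ : MemLp g 2 P)
    (_ : 0 < varP P f) (_ : 0 < varP P g),
    ENNReal.ofReal |covP P f g / (Real.sqrt (varP P f) * Real.sqrt (varP P g))|

/-- ρ-mixing "except on small sets": the coefficient `ρ_cond`. -/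
def rhoCondDep {mΩ : MeasurableSpace Ω} (P : Measure Ω) (𝒜 𝒝 : MeasurableSpace Ω) : ℝ≥0∞ :=
  sInf ({1} ∪ {ε : ℝ≥0∞ | 0 < ε ∧ ε < 1 ∧ ∃ D : Set Ω, MeasurableSet[𝒜] D ∧
    1 - ε ≤ P D ∧ rhoDep (ProbabilityTheory.cond P D) 𝒜 𝒝 ≤ ε})

/-- σ-field generated by the `X k`, `k ≤ j`. -/
def sigmaLE (X : ℤ → Ω → ℝ) (j : ℤ) : MeasurableSpace Ω :=
  ⨆ k : ℤ, ⨆ _ : k ≤ j, MeasurableSpace.comap (X k) (inferInstance : MeasurableSpace ℝ)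

/-- σ-field generated by the `X k`, `k ≥ j`. -/
def sigmaGE (X : ℤ → Ω → ℝ) (j : ℤ) : MeasurableSpace Ω :=
  ⨆ k : ℤ, ⨆ _ : j ≤ k, MeasurableSpace.comap (X k) (inferInstance : MeasurableSpace ℝ)

/-- σ-field generated by the `X k`, `k ∈ S`. -/
def sigmaOn (X : ℤ → Ω → ℝ) (S : Set ℤ) : MeasurableSpace Ω :=
  ⨆ k ∈ S, MeasurableSpace.comap (X k) (inferInstance : MeasurableSpace ℝ)

/-- The α-mixing coefficients `α(n)` of a random sequence. -/
def alphaSeq {mΩ : MeasurableSpace Ω} (P : Measure Ω) (X : ℤ → Ω → ℝ) (n : ℕ) : ℝ≥0∞ :=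
  ⨆ j : ℤ, alphaDep P (sigmaLE X j) (sigmaGE X (j + n))

/-- The ρ-mixing coefficients `ρ(n)` of a random sequence. -/
def rhoSeq {mΩ : MeasurableSpace Ω} (P : Measure Ω) (X : ℤ → Ω → ℝ) (n : ℕ) : ℝ≥0∞ :=
  ⨆ j : ℤ, rhoDep P (sigmaLE X j) (sigmaGE X (j + n))

/-- The coefficients `ρ_cond(n)` of a random sequence. -/
def rhoCondSeq {mΩ : MeasurableSpace Ω} (P : Measure Ω) (X : ℤ → Ω → ℝ) (n : ℕ) : ℝ≥0∞ :=
  ⨆ j : ℤ, rhoCondDep P (sigmaLE X j) (sigmaGE X (j + n))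

/-- Strict stationarity: all shifts of the sequence have the same law on `ℝ^ℤ`. -/
def StrictlyStationary {mΩ : MeasurableSpace Ω} (P : Measure Ω) (X : ℤ → Ω → ℝ) : Prop :=
  ∀ n : ℤ, Measure.map (fun ω => fun k => X (k + n) ω) P
    = Measure.map (fun ω => fun k => X k ω) P

/-- The interlaced coefficients `α*(n)`. -/
def alphaStarSeq {mΩ : MeasurableSpace Ω} (P : Measure Ω) (X : ℤ → Ω → ℝ) (n : ℕ) : ℝ≥0∞ :=
  ⨆ (S : Set ℤ) (T : Set ℤ) (_ : S.Nonempty) (_ : T.Nonempty) (_ : Disjoint S T)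
    (_ : ∀ s ∈ S, ∀ t ∈ T, (n : ℤ) ≤ |s - t|),
    alphaDep P (sigmaOn X S) (sigmaOn X T)

/-- The interlaced coefficients `ρ*(n)`. -/
def rhoStarSeq {mΩ : MeasurableSpace Ω} (P : Measure Ω) (X : ℤ → Ω → ℝ) (n : ℕ) : ℝ≥0∞ :=
  ⨆ (S : Set ℤ) (T : Set ℤ) (_ : S.Nonempty) (_ : T.Nonempty) (_ : Disjoint S T)
    (_ : ∀ s ∈ S, ∀ t ∈ T, (n : ℤ) ≤ |s - t|),
    rhoDep P (sigmaOn X S) (sigmaOn X T)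

/-- The interlaced coefficients `β*(n)`. -/
def betaStarSeq {mΩ : MeasurableSpace Ω} (P : Measure Ω) (X : ℤ → Ω → ℝ) (n : ℕ) : ℝ≥0∞ :=
  ⨆ (S : Set ℤ) (T : Set ℤ) (_ : S.Nonempty) (_ : T.Nonempty) (_ : Disjoint S T)
    (_ : ∀ s ∈ S, ∀ t ∈ T, (n : ℤ) ≤ |s - t|),
    betaDep P (sigmaOn X S) (sigmaOn X T)

/-- `m`-dependence of a random sequence. -/
def MDependent {mΩ : MeasurableSpace Ω} (P : Measure Ω) (X : ℤ → Ω → ℝ) (m : ℕ) : Prop :=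
  ∀ j : ℤ, ProbabilityTheory.Indep (sigmaLE X j) (sigmaGE X (j + m + 1)) P

/-- Mixing in the ergodic-theoretic sense. -/
def MixingET {mΩ : MeasurableSpace Ω} (P : Measure Ω) (X : ℤ → Ω → ℝ) : Prop :=
  ∀ A B : Set (ℤ → ℝ), MeasurableSet A → MeasurableSet B →
    Tendsto (fun n : ℕ => P {ω | (fun k => X k ω) ∈ A ∧ (fun k => X (k + n) ω) ∈ B})
      atTop (nhds (P {ω | (fun k => X k ω) ∈ A} * P {ω | (fun k => X k ω) ∈ B}))

/-- The Markov property: past and future are conditionally independent given the present. -/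
def IsMarkovChain {mΩ : MeasurableSpace Ω} (P : Measure Ω) (X : ℤ → Ω → ℝ) : Prop :=
  ∀ j : ℤ, ∀ A B : Set Ω, MeasurableSet[sigmaLE X j] A → MeasurableSet[sigmaGE X j] B →
    MeasureTheory.condExp (MeasurableSpace.comap (X j) (inferInstance : MeasurableSpace ℝ)) P
        ((A ∩ B).indicator (fun _ => (1 : ℝ)))
      =ᵐ[P] fun ω =>
        (MeasureTheory.condExp (MeasurableSpace.comap (X j) (inferInstance : MeasurableSpace ℝ)) P
          (A.indicator (fun _ => (1 : ℝ))) ω) *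
        (MeasureTheory.condExp (MeasurableSpace.comap (X j) (inferInstance : MeasurableSpace ℝ)) P
          (B.indicator (fun _ => (1 : ℝ))) ω)


/-- if `ψ*(𝒜,𝒝) < ∞` then `I(𝒜,𝒝) ≤ ψ*(𝒜,𝒝)·log ψ*(𝒜,𝒝)`. -/
theorem info_le_psiStar_mul_log_psiStar
    {Ω : Type*} {mΩ : MeasurableSpace Ω} (P : Measure Ω) [IsProbabilityMeasure P]
    (𝒜 𝒝 : MeasurableSpace Ω) (h𝒜 : 𝒜 ≤ mΩ) (h𝒝 : 𝒝 ≤ mΩ)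
    (hfin : psiStarDep P 𝒜 𝒝 < ⊤) :
    infoDep P 𝒜 𝒝 ≤
      ENNReal.ofReal ((psiStarDep P 𝒜 𝒝).toReal * Real.log (psiStarDep P 𝒜 𝒝).toReal) := by
  have hne : psiStarDep P 𝒜 𝒝 ≠ ⊤ := hfin.ne
  set K := (psiStarDep P 𝒜 𝒝).toReal with hKdef
  have huniv : (1 : ℝ≥0∞) ≤ psiStarDep P 𝒜 𝒝 := by
    have h1 : ENNReal.ofReal ((P (Set.univ ∩ Set.univ)).toReal /
        ((P (Set.univ : Set Ω)).toReal * (P (Set.univ : Set Ω)).toReal)) ≤ psiStarDep P 𝒜 𝒝 :=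
      le_iSup_of_le Set.univ (le_iSup_of_le MeasurableSet.univ
        (le_iSup_of_le (by simp) (le_iSup_of_le Set.univ (le_iSup_of_le MeasurableSet.univ
          (le_iSup_of_le (by simp) le_rfl)))))
    simpa using h1
  have hK1 : (1:ℝ) ≤ K := by
    have := ENNReal.toReal_mono hne huniv
    simpa using this
  have hlogK : 0 ≤ Real.log K := Real.log_nonneg hK1
  have hratio : ∀ A B : Set Ω, MeasurableSet[𝒜] A → MeasurableSet[𝒝] B →
      0 < P A → 0 < P B →
      (P (A ∩ B)).toReal / ((P A).toReal * (P B).toReal) ≤ K := by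
    intro A B hA hB hPA hPB
    have hle : ENNReal.ofReal ((P (A ∩ B)).toReal / ((P A).toReal * (P B).toReal))
        ≤ psiStarDep P 𝒜 𝒝 :=
      le_iSup_of_le A (le_iSup_of_le hA (le_iSup_of_le hPA
        (le_iSup_of_le B (le_iSup_of_le hB (le_iSup_of_le hPB le_rfl)))))
    have h0 : 0 ≤ (P (A ∩ B)).toReal / ((P A).toReal * (P B).toReal) :=
      div_nonneg ENNReal.toReal_nonneg (mul_nonneg ENNReal.toReal_nonneg ENNReal.toReal_nonneg)
    calc (P (A ∩ B)).toReal / ((P A).toReal * (P B).toReal)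
        = (ENNReal.ofReal ((P (A ∩ B)).toReal / ((P A).toReal * (P B).toReal))).toReal :=
          (ENNReal.toReal_ofReal h0).symm
      _ ≤ K := ENNReal.toReal_mono hne hle
  rw [infoDep]
  refine iSup_le fun I => iSup_le fun J => iSup_le fun A => iSup_le fun B =>
    iSup_le fun hA => iSup_le fun hB => ?_
  apply ENNReal.ofReal_le_ofReal
  have hmeas : ∀ (i : Fin I) (j : Fin J), MeasurableSet[mΩ] (A i ∩ B j) :=
    fun i j => (h𝒜 _ (hA.1 i)).inter (h𝒝 _ (hB.1 j))
  have hsumE : ∑ p : Fin I × Fin J, P (A p.1 ∩ B p.2) = 1 := by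
    have hd : ((Finset.univ : Finset (Fin I × Fin J)) : Set (Fin I × Fin J)).PairwiseDisjoint
        (fun p : Fin I × Fin J => A p.1 ∩ B p.2) := by
      intro p _ q _ hpq
      by_cases h1 : p.1 = q.1
      · have h2 : p.2 ≠ q.2 := fun h2 => hpq (Prod.ext h1 h2)
        exact Disjoint.mono Set.inter_subset_right Set.inter_subset_right (hB.2.1 h2)
      · exact Disjoint.mono Set.inter_subset_left Set.inter_subset_left (hA.2.1 h1)
    have hu : ⋃ p ∈ (Finset.univ : Finset (Fin I × Fin J)), A p.1 ∩ B p.2 = Set.univ := by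
      ext ω
      simp only [Set.mem_iUnion, Finset.mem_univ, Set.mem_inter_iff, Set.mem_univ, iff_true,
        exists_prop, true_and]
      obtain ⟨i, hi⟩ := Set.mem_iUnion.mp (hA.2.2.symm ▸ Set.mem_univ ω)
      obtain ⟨j, hj⟩ := Set.mem_iUnion.mp (hB.2.2.symm ▸ Set.mem_univ ω)
      exact ⟨(i, j), hi, hj⟩
    have := measure_biUnion_finset (μ := P) hd (fun p _ => hmeas p.1 p.2)
    rw [hu, measure_univ] at this
    exact this.symm
  have hsum : ∑ i, ∑ j, (P (A i ∩ B j)).toReal = 1 := by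
    have h := congrArg ENNReal.toReal hsumE
    rw [ENNReal.toReal_sum (fun p _ => measure_ne_top P _)] at h
    have h2 : ∑ p : Fin I × Fin J, (P (A p.1 ∩ B p.2)).toReal
        = ∑ i, ∑ j, (P (A i ∩ B j)).toReal := Fintype.sum_prod_type _
    rw [h2] at h
    simpa using h
  calc ∑ i, ∑ j, (P (A i ∩ B j)).toReal *
        Real.log ((P (A i ∩ B j)).toReal / ((P (A i)).toReal * (P (B j)).toReal))
      ≤ ∑ i, ∑ j, (P (A i ∩ B j)).toReal * Real.log K := by
        refine Finset.sum_le_sum fun i _ => Finset.sum_le_sum fun j _ => ?_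
        rcases eq_or_lt_of_le (ENNReal.toReal_nonneg : 0 ≤ (P (A i ∩ B j)).toReal) with hp | hp
        · simp [← hp]
        · have hPAB : 0 < P (A i ∩ B j) := (ENNReal.toReal_pos_iff.mp hp).1
          have hPA : 0 < P (A i) := lt_of_lt_of_le hPAB (measure_mono Set.inter_subset_left)
          have hPB : 0 < P (B j) := lt_of_lt_of_le hPAB (measure_mono Set.inter_subset_right)
          have ha : 0 < (P (A i)).toReal := ENNReal.toReal_pos hPA.ne' (measure_ne_top P _)
          have hb : 0 < (P (B j)).toReal := ENNReal.toReal_pos hPB.ne' (measure_ne_top P _)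
          have hrpos : 0 < (P (A i ∩ B j)).toReal / ((P (A i)).toReal * (P (B j)).toReal) :=
            div_pos hp (mul_pos ha hb)
          have hr := hratio _ _ (hA.1 i) (hB.1 j) hPA hPB
          exact mul_le_mul_of_nonneg_left (Real.log_le_log hrpos hr) hp.le
    _ = (∑ i, ∑ j, (P (A i ∩ B j)).toReal) * Real.log K := by
        simp [Finset.sum_mul]
    _ = Real.log K := by rw [hsum, one_mul]
    _ ≤ K * Real.log K := le_mul_of_one_le_left hlogK hK1

end StrongMixing
end
end

section
/- Let (Ω, F, P) be a probability space and let A and B be sub-σ-fields of F. Then β(A,B) ≤ [I(A,B)]^{1/2} (Volkonskii–Rozanov inequality; trivially true if I(A,B) = ∞). -/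
open MeasureTheory ProbabilityTheory ENNReal Filter

noncomputable section

namespace StrongMixing

variable {Ω : Type*}

section PinskerAux

private lemma logA {s : ℝ} (hs : 1 ≤ s) : Real.log s ≤ (s - 1/s)/2 := by
  set F : ℝ → ℝ := fun x => (x - x⁻¹)/2 - Real.log x with hF
  have key : ∀ x : ℝ, 0 < x → HasDerivAt F ((1 - (-(x^2)⁻¹))/2 - x⁻¹) x := by
    intro x hx0
    exact (((hasDerivAt_id x).sub (hasDerivAt_inv hx0.ne')).div_const 2).sub
      (Real.hasDerivAt_log hx0.ne')
  have hmono : MonotoneOn F (Set.Ici (1:ℝ)) := by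
    apply monotoneOn_of_deriv_nonneg (convex_Ici 1)
    · intro x hx
      have hx0 : (0:ℝ) < x := lt_of_lt_of_le one_pos hx
      exact (key x hx0).continuousAt.continuousWithinAt
    · intro x hx
      rw [interior_Ici] at hx
      have hx0 : (0:ℝ) < x := lt_trans one_pos hx
      exact (key x hx0).differentiableAt.differentiableWithinAt
    · intro x hx
      rw [interior_Ici] at hx
      have hx0 : (0:ℝ) < x := lt_trans one_pos hx
      rw [(key x hx0).deriv]
      have h1 : x⁻¹ ≤ 1 := inv_le_one_of_one_le₀ hx.le
      have h2 : (0:ℝ) < x^2 := by positivity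
      have : (1 - (-(x^2)⁻¹))/2 - x⁻¹ = (x - 1)^2 / (2 * x^2) := by
        field_simp; ring
      rw [this]; positivity
  have h1 : F 1 ≤ F s := hmono (by simp) hs hs
  simp only [hF, Real.log_one, inv_one] at h1
  have : (1 - 1)/2 - 0 ≤ (s - s⁻¹)/2 - Real.log s := by simpa using h1
  have hinv : (1:ℝ)/s = s⁻¹ := one_div s
  linarith

private lemma keyB {t : ℝ} (ht : 1 ≤ t) : (t-1)^2/(2*t) ≤ t * Real.log t - t + 1 := by
  set G : ℝ → ℝ := fun x => x * Real.log x - x + 1 - (x-1)^2/(2*x) with hG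
  have key : ∀ x : ℝ, 0 < x →
      HasDerivAt G (1 * Real.log x + x * x⁻¹ - 1 + 0 - (2*(x-1)*(2*x) - (x-1)^2*2)/(2*x)^2) x := by
    intro x hx0
    have h1 : HasDerivAt (fun x : ℝ => x * Real.log x) (1 * Real.log x + x * x⁻¹) x :=
      (hasDerivAt_id x).mul (Real.hasDerivAt_log hx0.ne')
    have h2 : HasDerivAt (fun x : ℝ => (x-1)^2) (2*(x-1)) x := by
      have := ((hasDerivAt_id x).sub_const 1).pow 2
      simp at this; exact this
    have h3 : HasDerivAt (fun x : ℝ => 2*x) 2 x := by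
      simpa using (hasDerivAt_id x).const_mul 2
    have h4 : HasDerivAt (fun x : ℝ => (x-1)^2/(2*x))
        ((2*(x-1)*(2*x) - (x-1)^2*2)/(2*x)^2) x :=
      h2.div h3 (by positivity)
    have := ((h1.sub (hasDerivAt_id x)).add_const 1).sub h4
    refine this.congr_deriv ?_
    ring
  have hmono : MonotoneOn G (Set.Ici (1:ℝ)) := by
    apply monotoneOn_of_deriv_nonneg (convex_Ici 1)
    · intro x hx
      exact (key x (lt_of_lt_of_le one_pos hx)).continuousAt.continuousWithinAt
    · intro x hx
      rw [interior_Ici] at hx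
      exact (key x (lt_trans one_pos hx)).differentiableAt.differentiableWithinAt
    · intro x hx
      rw [interior_Ici] at hx
      have hx0 : (0:ℝ) < x := lt_trans one_pos hx
      rw [(key x hx0).deriv]
      have hlog : (1 - (x^2)⁻¹) ≤ Real.log (x^2) :=
        Real.one_sub_inv_le_log_of_pos (by positivity)
      rw [Real.log_pow] at hlog
      push_cast at hlog
      have hx2 : (0:ℝ) < x^2 := by positivity
      have hxx : x * x⁻¹ = 1 := mul_inv_cancel₀ hx0.ne'
      have hsimp : (2*(x-1)*(2*x) - (x-1)^2*2)/(2*x)^2 = 1/2 - (x^2)⁻¹/2 * (2 - x⁻¹ * x) := by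
        field_simp; ring
    -- goal: 0 ≤ 1 * log x + x*x⁻¹ - 1 + 0 - (...)
      have hix : x⁻¹ * x = 1 := inv_mul_cancel₀ hx0.ne'
      rw [hsimp, hxx, hix]
      linarith
  have h1 : G 1 ≤ G t := hmono (by simp) ht ht
  simp only [hG, Real.log_one] at h1
  have : (0:ℝ) ≤ t * Real.log t - t + 1 - (t-1)^2/(2*t) := by
    have h0 : (1:ℝ) * 0 - 1 + 1 - (1-1)^2/(2*1) = 0 := by norm_num
    linarith [h1]
  linarith

private lemma keyC {t : ℝ} (ht0 : 0 ≤ t) (ht : t ≤ 1) : (t-1)^2/2 ≤ t * Real.log t - t + 1 := by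
  rcases eq_or_lt_of_le ht0 with h | h
  · rw [← h]; norm_num
  · have hs : 1 ≤ t⁻¹ := (one_le_inv₀ h).2 ht
    have := logA hs
    have hlog : (t - t⁻¹)/2 ≤ Real.log t := by
      rw [show Real.log t = -Real.log t⁻¹ by rw [Real.log_inv]; ring]
      have h1 : (1:ℝ)/t⁻¹ = t := by field_simp
      rw [h1] at this
      linarith
    have h2 : t * ((t - t⁻¹)/2) ≤ t * Real.log t := by
      exact mul_le_mul_of_nonneg_left hlog ht0
    have h3 : t * ((t - t⁻¹)/2) = (t^2 - 1)/2 := by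
      field_simp
    nlinarith

private lemma keyPoint {p q : ℝ} (hp : 0 ≤ p) (hq : 0 ≤ q) (h0 : q = 0 → p = 0) :
    0 ≤ p * Real.log (p/q) - p + q ∧
    (p - q)^2 ≤ 2 * max p q * (p * Real.log (p/q) - p + q) := by
  rcases eq_or_lt_of_le hq with h | hq0
  · rw [h0 h.symm, ← h]; norm_num
  · set t : ℝ := p / q with hT
    have ht0 : 0 ≤ t := div_nonneg hp hq0.le
    have hpt : p = t * q := by rw [hT, div_mul_cancel₀ _ hq0.ne']
    have hkey : (t-1)^2 ≤ 2 * max t 1 * (t * Real.log t - t + 1) := by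
      rcases le_total t 1 with hle | hge
      · rw [max_eq_right hle]
        have := keyC ht0 hle
        linarith
      · rw [max_eq_left hge]
        have := keyB hge
        have h2t : (0:ℝ) < 2 * t := by linarith
        rw [div_le_iff₀ h2t] at this
        linarith
    have hnn : 0 ≤ t * Real.log t - t + 1 := by
      nlinarith [sq_nonneg (t-1), le_max_right t 1, le_max_left t 1, sq_nonneg t]
    have hmax : max p q = q * max t 1 := by
      rw [hpt, mul_comm t q, mul_max_of_nonneg _ _ hq0.le, mul_one]
    have hlogeq : Real.log (p/q) = Real.log t := by rw [hT]
    have heq : p * Real.log (p/q) - p + q = q * (t * Real.log t - t + 1) := by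
      rw [hlogeq]; rw [hpt]; ring
    constructor
    · rw [heq]
      exact mul_nonneg hq0.le hnn
    · 
      rw [heq, hmax, hpt]
      have : (t * q - q)^2 = q^2 * (t-1)^2 := by ring
      rw [this]
      calc q^2 * (t-1)^2 ≤ q^2 * (2 * max t 1 * (t * Real.log t - t + 1)) := by
            exact mul_le_mul_of_nonneg_left hkey (sq_nonneg q)
        _ = 2 * (q * max t 1) * (q * (t * Real.log t - t + 1)) := by ring

private lemma pinsker_weak {ι : Type*} [Fintype ι] (p q : ι → ℝ)
    (hp : ∀ k, 0 ≤ p k) (hq : ∀ k, 0 ≤ q k) (h0 : ∀ k, q k = 0 → p k = 0)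
    (hp1 : ∑ k, p k = 1) (hq1 : ∑ k, q k = 1) :
    (1/2) * ∑ k, |p k - q k| ≤ Real.sqrt (∑ k, p k * Real.log (p k / q k)) := by
  set f : ι → ℝ := fun k => p k * Real.log (p k / q k) - p k + q k with hf
  set ψ : ι → ℝ := fun k => 2 * max (p k) (q k) with hψ
  have hfnn : ∀ k, 0 ≤ f k := fun k => (keyPoint (hp k) (hq k) (h0 k)).1
  have hψnn : ∀ k, 0 ≤ ψ k := fun k => by
    have := le_max_left (p k) (q k); have := hp k; simp only [hψ]; positivity
  have hkey : ∀ k, (p k - q k)^2 ≤ ψ k * f k := fun k =>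
    (keyPoint (hp k) (hq k) (h0 k)).2
  -- Cauchy–Schwarz
  have hCS : (∑ k, Real.sqrt (ψ k * f k)) ^ 2 ≤ (∑ k, ψ k) * ∑ k, f k := by
    apply Finset.sum_sq_le_sum_mul_sum_of_sq_eq_mul
    · exact fun k _ => hψnn k
    · exact fun k _ => hfnn k
    · exact fun k _ => Real.sq_sqrt (mul_nonneg (hψnn k) (hfnn k))
  have habs : ∑ k, |p k - q k| ≤ ∑ k, Real.sqrt (ψ k * f k) := by
    apply Finset.sum_le_sum
    intro k _
    have := Real.sqrt_le_sqrt (hkey k)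
    rwa [Real.sqrt_sq_eq_abs] at this
  have hψsum : ∑ k, ψ k ≤ 4 := by
    have : ∀ k, ψ k ≤ 2 * (p k + q k) := fun k => by
      have := max_le_add_of_nonneg (hp k) (hq k)
      simp only [hψ]; linarith
    calc ∑ k, ψ k ≤ ∑ k, 2 * (p k + q k) := Finset.sum_le_sum fun k _ => this k
      _ = 4 := by rw [← Finset.mul_sum, Finset.sum_add_distrib, hp1, hq1]; norm_num
  have hfsum : ∑ k, f k = ∑ k, p k * Real.log (p k / q k) := by
    simp only [hf, Finset.sum_add_distrib, Finset.sum_sub_distrib, hp1, hq1]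
    ring
  have hKLnn : 0 ≤ ∑ k, p k * Real.log (p k / q k) := by
    rw [← hfsum]; exact Finset.sum_nonneg fun k _ => hfnn k
  have hsqnn : 0 ≤ ∑ k, Real.sqrt (ψ k * f k) :=
    Finset.sum_nonneg fun k _ => Real.sqrt_nonneg _
  have h2 : (∑ k, Real.sqrt (ψ k * f k)) ^ 2 ≤ 4 * ∑ k, p k * Real.log (p k / q k) := by
    calc (∑ k, Real.sqrt (ψ k * f k)) ^ 2 ≤ (∑ k, ψ k) * ∑ k, f k := hCS
      _ ≤ 4 * ∑ k, p k * Real.log (p k / q k) := by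
          rw [hfsum]
          exact mul_le_mul_of_nonneg_right hψsum (hfsum ▸ hKLnn)
  have h3 : ∑ k, Real.sqrt (ψ k * f k) ≤ 2 * Real.sqrt (∑ k, p k * Real.log (p k / q k)) := by
    have h5 : ∑ k, Real.sqrt (ψ k * f k) ≤ Real.sqrt (4 * ∑ k, p k * Real.log (p k / q k)) := by
      rw [show (4 * ∑ k, p k * Real.log (p k / q k)) = (∑ k, Real.sqrt (ψ k * f k))^2 + (4 * (∑ k, p k * Real.log (p k / q k)) - (∑ k, Real.sqrt (ψ k * f k))^2) by ring]
      calc ∑ k, Real.sqrt (ψ k * f k) = Real.sqrt ((∑ k, Real.sqrt (ψ k * f k))^2) := by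
            rw [Real.sqrt_sq hsqnn]
        _ ≤ _ := Real.sqrt_le_sqrt (by linarith)
    rwa [Real.sqrt_mul (by norm_num : (0:ℝ) ≤ 4),
      show Real.sqrt 4 = 2 by rw [show (4:ℝ) = 2^2 by norm_num, Real.sqrt_sq (by norm_num : (0:ℝ) ≤ 2)]] at h5
  have h4 := le_trans habs h3
  linarith

end PinskerAux

/-- the Volkonskii–Rozanov inequality `β(𝒜,𝒝) ≤ I(𝒜,𝒝)^{1/2}`. -/
theorem beta_le_sqrt_info
    {Ω : Type*} {mΩ : MeasurableSpace Ω} (P : Measure Ω) [IsProbabilityMeasure P]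
    (𝒜 𝒝 : MeasurableSpace Ω) (h𝒜 : 𝒜 ≤ mΩ) (h𝒝 : 𝒝 ≤ mΩ) :
    betaDep P 𝒜 𝒝 ≤ infoDep P 𝒜 𝒝 ^ ((1 : ℝ) / 2) := by
  rw [betaDep]
  refine iSup_le fun I => iSup_le fun J => iSup_le fun A => iSup_le fun B =>
    iSup_le fun hA => iSup_le fun hB => ?_
  have hAm : ∀ i, MeasurableSet[mΩ] (A i) := fun i => h𝒜 _ (hA.1 i)
  have hBm : ∀ j, MeasurableSet[mΩ] (B j) := fun j => h𝒝 _ (hB.1 j)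
  set p : Fin I × Fin J → ℝ := fun k => (P (A k.1 ∩ B k.2)).toReal with hp_def
  set pa : Fin I → ℝ := fun i => (P (A i)).toReal with hpa_def
  set qb : Fin J → ℝ := fun j => (P (B j)).toReal with hqb_def
  set q : Fin I × Fin J → ℝ := fun k => pa k.1 * qb k.2 with hq_def
  have hAsum : ∀ i, pa i = ∑ j, p (i, j) := by
    intro i
    have hU : A i = ⋃ j, A i ∩ B j := by
      rw [← Set.inter_iUnion, hB.2.2, Set.inter_univ]
    have hd : Pairwise (Function.onFun Disjoint fun j => A i ∩ B j) := by
      intro j j' hjj'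
      exact (hB.2.1 hjj').mono Set.inter_subset_right Set.inter_subset_right
    have := measure_iUnion (μ := P) hd (fun j => (hAm i).inter (hBm j))
    rw [← hU, tsum_fintype] at this
    rw [hpa_def]
    simp only [this]
    exact ENNReal.toReal_sum fun j _ => measure_ne_top P _
  have hBsum : ∀ j, qb j = ∑ i, p (i, j) := by
    intro j
    have hU : B j = ⋃ i, A i ∩ B j := by
      rw [← Set.iUnion_inter, hA.2.2, Set.univ_inter]
    have hd : Pairwise (Function.onFun Disjoint fun i => A i ∩ B j) := by
      intro i i' hii'
      exact (hA.2.1 hii').mono Set.inter_subset_left Set.inter_subset_left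
    have := measure_iUnion (μ := P) hd (fun i => (hAm i).inter (hBm j))
    rw [← hU, tsum_fintype] at this
    rw [hqb_def]
    simp only [this]
    exact ENNReal.toReal_sum fun i _ => measure_ne_top P _
  have hA1 : ∑ i, pa i = 1 := by
    have hU : (Set.univ : Set Ω) = ⋃ i, A i := hA.2.2.symm
    have := measure_iUnion (μ := P) hA.2.1 hAm
    rw [← hU, measure_univ, tsum_fintype] at this
    have h2 := congrArg ENNReal.toReal this
    rw [ENNReal.toReal_one, ENNReal.toReal_sum (fun i _ => measure_ne_top P _)] at h2
    exact h2.symm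
  have hB1 : ∑ j, qb j = 1 := by
    have hU : (Set.univ : Set Ω) = ⋃ j, B j := hB.2.2.symm
    have := measure_iUnion (μ := P) hB.2.1 hBm
    rw [← hU, measure_univ, tsum_fintype] at this
    have h2 := congrArg ENNReal.toReal this
    rw [ENNReal.toReal_one, ENNReal.toReal_sum (fun j _ => measure_ne_top P _)] at h2
    exact h2.symm
  have hpnn : ∀ k, 0 ≤ p k := fun k => ENNReal.toReal_nonneg
  have hqnn : ∀ k, 0 ≤ q k := fun k =>
    mul_nonneg ENNReal.toReal_nonneg ENNReal.toReal_nonneg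
  have hple : ∀ k : Fin I × Fin J, p k ≤ pa k.1 := fun k =>
    ENNReal.toReal_mono (measure_ne_top P _) (measure_mono Set.inter_subset_left)
  have hple' : ∀ k : Fin I × Fin J, p k ≤ qb k.2 := fun k =>
    ENNReal.toReal_mono (measure_ne_top P _) (measure_mono Set.inter_subset_right)
  have h0 : ∀ k, q k = 0 → p k = 0 := by
    intro k hk
    rcases mul_eq_zero.1 hk with h | h
    · exact le_antisymm (h ▸ hple k) (hpnn k)
    · exact le_antisymm (h ▸ hple' k) (hpnn k)
  have hp1 : ∑ k, p k = 1 := by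
    rw [Fintype.sum_prod_type]
    calc ∑ i, ∑ j, p (i, j) = ∑ i, pa i := by
          exact Finset.sum_congr rfl fun i _ => (hAsum i).symm
      _ = 1 := hA1
  have hq1 : ∑ k, q k = 1 := by
    rw [Fintype.sum_prod_type]
    simp only [hq_def]
    calc ∑ i, ∑ j, pa i * qb j = ∑ i, pa i * ∑ j, qb j := by
          exact Finset.sum_congr rfl fun i _ => (Finset.mul_sum _ _ _).symm
      _ = 1 := by rw [hB1]; simp only [mul_one]; exact hA1
  have hpin := pinsker_weak p q hpnn hqnn h0 hp1 hq1
  set KL : ℝ := ∑ i, ∑ j, (P (A i ∩ B j)).toReal *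
      Real.log ((P (A i ∩ B j)).toReal / ((P (A i)).toReal * (P (B j)).toReal)) with hKL_def
  have hKLeq : ∑ k, p k * Real.log (p k / q k) = KL := by
    rw [hKL_def, Fintype.sum_prod_type]
  have hsum_eq : ∑ i, ∑ j, |(P (A i ∩ B j)).toReal - (P (A i)).toReal * (P (B j)).toReal|
      = ∑ k, |p k - q k| := by
    rw [Fintype.sum_prod_type]
  have hKLnn : 0 ≤ KL := by
    rw [← hKLeq]
    have heq2 : ∑ k, p k * Real.log (p k / q k)
        = ∑ k, (p k * Real.log (p k / q k) - p k + q k) := by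
      rw [Finset.sum_add_distrib, Finset.sum_sub_distrib, hp1, hq1]; ring
    rw [heq2]
    exact Finset.sum_nonneg fun k _ => (keyPoint (hpnn k) (hqnn k) (h0 k)).1
  calc ENNReal.ofReal ((1 / 2) * ∑ i, ∑ j,
        |(P (A i ∩ B j)).toReal - (P (A i)).toReal * (P (B j)).toReal|)
      ≤ ENNReal.ofReal (Real.sqrt KL) := by
        apply ENNReal.ofReal_le_ofReal
        rw [hsum_eq]
        rw [hKLeq] at hpin
        exact hpin
    _ = ENNReal.ofReal KL ^ ((1 : ℝ) / 2) := by
        rw [Real.sqrt_eq_rpow, ENNReal.ofReal_rpow_of_nonneg hKLnn (by norm_num)]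
    _ ≤ infoDep P 𝒜 𝒝 ^ ((1 : ℝ) / 2) := by
        apply ENNReal.rpow_le_rpow _ (by norm_num)
        rw [infoDep]
        exact le_iSup_of_le I <| le_iSup_of_le J <| le_iSup_of_le A <| le_iSup_of_le B <|
          le_iSup_of_le hA <| le_iSup_of_le hB le_rfl

end StrongMixing
end
end

section
/- Let (Ω, F, P) be a probability space and let A and B be sub-σ-fields of F. Then α(A,B) ≤ 4·ρ_cond(A,B). -/
open MeasureTheory ProbabilityTheory ENNReal Filter

noncomputable section

namespace StrongMixing

variable {Ω : Type*}

section AuxProofs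

variable {Ω : Type*} {mΩ : MeasurableSpace Ω}

lemma integral_indicator_one' (Q : Measure Ω) {A : Set Ω} (hA : MeasurableSet A) :
    ∫ ω, A.indicator (fun _ => (1:ℝ)) ω ∂Q = (Q A).toReal := by
  rw [MeasureTheory.integral_indicator_const (1:ℝ) hA]; simp [Measure.real]

lemma covP_indicator (Q : Measure Ω) [IsProbabilityMeasure Q] {A B : Set Ω}
    (hA : MeasurableSet A) (hB : MeasurableSet B) :
    covP Q (A.indicator fun _ => (1:ℝ)) (B.indicator fun _ => (1:ℝ)) =
      (Q (A ∩ B)).toReal - (Q A).toReal * (Q B).toReal := by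
  have hint : ∀ s : Set Ω, MeasurableSet s →
      Integrable (s.indicator fun _ => (1:ℝ)) Q :=
    fun s hs => (integrable_const 1).indicator hs
  set a := (Q A).toReal with ha
  set b := (Q B).toReal with hb
  have hIA := integral_indicator_one' Q hA
  have hIB := integral_indicator_one' Q hB
  unfold covP
  rw [hIA, hIB]
  have hfun : (fun ω => (A.indicator (fun _ => (1:ℝ)) ω - a) *
        (B.indicator (fun _ => (1:ℝ)) ω - b))
      = fun ω => (A ∩ B).indicator (fun _ => (1:ℝ)) ω +
          (a * b - (a * B.indicator (fun _ => (1:ℝ)) ω +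
            b * A.indicator (fun _ => (1:ℝ)) ω)) := by
    funext ω
    by_cases h1 : ω ∈ A <;> by_cases h2 : ω ∈ B <;>
      simp [Set.indicator_of_mem, Set.indicator_of_notMem, h1, h2, Set.mem_inter_iff] <;> ring
  have h2a : Integrable (fun ω => a * B.indicator (fun _ => (1:ℝ)) ω) Q := by
    exact (hint B hB).const_mul a
  have h2b : Integrable (fun ω => b * A.indicator (fun _ => (1:ℝ)) ω) Q := by
    exact (hint A hA).const_mul b
  have h2 : Integrable (fun ω => a * B.indicator (fun _ => (1:ℝ)) ω +
      b * A.indicator (fun _ => (1:ℝ)) ω) Q := by exact h2a.add h2b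
  have h3 : Integrable (fun ω => a * b - (a * B.indicator (fun _ => (1:ℝ)) ω +
      b * A.indicator (fun _ => (1:ℝ)) ω)) Q := by exact (integrable_const _).sub h2
  rw [hfun, integral_add (hint _ (hA.inter hB)) h3,
    MeasureTheory.integral_indicator_const (1:ℝ) (hA.inter hB),
    integral_sub (integrable_const _) h2,
    integral_add h2a h2b, integral_const,
    integral_const_mul, integral_const_mul, hIA, hIB]
  simp only [Measure.real, measure_univ, ENNReal.toReal_one, smul_eq_mul, one_smul, one_mul, mul_one]
  ring

lemma varP_indicator (Q : Measure Ω) [IsProbabilityMeasure Q] {A : Set Ω}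
    (hA : MeasurableSet A) :
    varP Q (A.indicator fun _ => (1:ℝ)) = (Q A).toReal * (1 - (Q A).toReal) := by
  unfold varP
  rw [covP_indicator Q hA hA, Set.inter_self]; ring

lemma degen_inter (Q : Measure Ω) [IsProbabilityMeasure Q] {A : Set Ω} (B : Set Ω)
    (hA : MeasurableSet A) (h : Q A = 0 ∨ Q A = 1) : Q (A ∩ B) = Q A * Q B := by
  rcases h with h | h
  · rw [h, zero_mul]
    exact measure_mono_null Set.inter_subset_left h
  · rw [h, one_mul]
    refine le_antisymm (measure_mono Set.inter_subset_right) ?_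
    have hc : Q Aᶜ = 0 := by
      rw [measure_compl hA (measure_ne_top _ _), h, measure_univ, tsub_self]
    calc Q B ≤ Q (A ∩ B) + Q (Aᶜ ∩ B) := by
          refine (measure_mono ?_).trans (measure_union_le _ _)
          intro x hx
          by_cases hxA : x ∈ A
          · exact Or.inl ⟨hxA, hx⟩
          · exact Or.inr ⟨hxA, hx⟩
      _ ≤ Q (A ∩ B) + 0 :=
          add_le_add (le_refl _) (le_of_eq (measure_mono_null Set.inter_subset_left hc))
      _ = Q (A ∩ B) := add_zero _

lemma core_rho_bound (Q : Measure Ω) [IsProbabilityMeasure Q] {𝒜 𝒝 : MeasurableSpace Ω}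
    (h𝒜 : 𝒜 ≤ mΩ) (h𝒝 : 𝒝 ≤ mΩ) {e : ℝ} (he : 0 ≤ e)
    (hρ : rhoDep Q 𝒜 𝒝 ≤ ENNReal.ofReal e)
    {A B : Set Ω} (hA : MeasurableSet[𝒜] A) (hB : MeasurableSet[𝒝] B) :
    |(Q (A ∩ B)).toReal - (Q A).toReal * (Q B).toReal| ≤ e / 4 := by
  have hAm := h𝒜 A hA
  have hBm := h𝒝 B hB
  by_cases hA01 : Q A = 0 ∨ Q A = 1
  · rw [degen_inter Q B hAm hA01, ENNReal.toReal_mul, sub_self, abs_zero]; linarith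
  by_cases hB01 : Q B = 0 ∨ Q B = 1
  · have h' : (Q (A ∩ B)).toReal = (Q A).toReal * (Q B).toReal := by
      rw [Set.inter_comm, degen_inter Q A hBm hB01, ENNReal.toReal_mul, mul_comm]
    rw [h', sub_self, abs_zero]; linarith
  push_neg at hA01 hB01
  set a := (Q A).toReal with ha
  set b := (Q B).toReal with hb
  have ha0 : 0 < a := ENNReal.toReal_pos hA01.1 (measure_ne_top _ _)
  have hb0 : 0 < b := ENNReal.toReal_pos hB01.1 (measure_ne_top _ _)
  have haLe : a ≤ 1 := by
    have := ENNReal.toReal_mono ENNReal.one_ne_top (prob_le_one (μ := Q) (s := A))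
    simpa using this
  have hbLe : b ≤ 1 := by
    have := ENNReal.toReal_mono ENNReal.one_ne_top (prob_le_one (μ := Q) (s := B))
    simpa using this
  have ha1 : a < 1 := lt_of_le_of_ne haLe (fun h => hA01.2 ((ENNReal.toReal_eq_one_iff _).1 h))
  have hb1 : b < 1 := lt_of_le_of_ne hbLe (fun h => hB01.2 ((ENNReal.toReal_eq_one_iff _).1 h))
  set f := A.indicator (fun _ => (1:ℝ)) with hf
  set g := B.indicator (fun _ => (1:ℝ)) with hg
  have hvf : varP Q f = a * (1 - a) := varP_indicator Q hAm
  have hvg : varP Q g = b * (1 - b) := varP_indicator Q hBm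
  have hvfpos : 0 < varP Q f := by rw [hvf]; nlinarith [sq_nonneg (a - 1/2)]
  have hvgpos : 0 < varP Q g := by rw [hvg]; nlinarith [sq_nonneg (b - 1/2)]
  have hcov : covP Q f g = (Q (A ∩ B)).toReal - a * b := covP_indicator Q hAm hBm
  have hmf : Measurable[𝒜] f := Measurable.indicator (@measurable_const ℝ Ω _ 𝒜 1) hA
  have hmg : Measurable[𝒝] g := Measurable.indicator (@measurable_const ℝ Ω _ 𝒝 1) hB
  have hl2f : MemLp f 2 Q := MeasureTheory.memLp_indicator_const 2 hAm 1 (Or.inr (measure_ne_top _ _))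
  have hl2g : MemLp g 2 Q := MeasureTheory.memLp_indicator_const 2 hBm 1 (Or.inr (measure_ne_top _ _))
  have hle : ENNReal.ofReal |covP Q f g / (Real.sqrt (varP Q f) * Real.sqrt (varP Q g))|
      ≤ rhoDep Q 𝒜 𝒝 :=
    le_iSup_of_le f (le_iSup_of_le g (le_iSup_of_le hmf (le_iSup_of_le hmg
      (le_iSup_of_le hl2f (le_iSup_of_le hl2g (le_iSup_of_le hvfpos
        (le_iSup_of_le hvgpos le_rfl)))))))
  have hre : |covP Q f g / (Real.sqrt (varP Q f) * Real.sqrt (varP Q g))| ≤ e :=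
    (ENNReal.ofReal_le_ofReal_iff he).1 (hle.trans hρ)
  set s1 := Real.sqrt (varP Q f) with hs1def
  set s2 := Real.sqrt (varP Q g) with hs2def
  have hs1 : 0 < s1 := Real.sqrt_pos.2 hvfpos
  have hs2 : 0 < s2 := Real.sqrt_pos.2 hvgpos
  have hs1le : s1 ≤ 1/2 := by
    have h14 : varP Q f ≤ (1/2:ℝ)^2 := by rw [hvf]; nlinarith [sq_nonneg (a - 1/2)]
    calc s1 ≤ Real.sqrt ((1/2:ℝ)^2) := Real.sqrt_le_sqrt h14
      _ = 1/2 := Real.sqrt_sq (by norm_num)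
  have hs2le : s2 ≤ 1/2 := by
    have h14 : varP Q g ≤ (1/2:ℝ)^2 := by rw [hvg]; nlinarith [sq_nonneg (b - 1/2)]
    calc s2 ≤ Real.sqrt ((1/2:ℝ)^2) := Real.sqrt_le_sqrt h14
      _ = 1/2 := Real.sqrt_sq (by norm_num)
  have habs : |covP Q f g| ≤ e * (s1 * s2) := by
    rw [abs_div, abs_of_pos (mul_pos hs1 hs2)] at hre
    exact (div_le_iff₀ (mul_pos hs1 hs2)).1 hre
  rw [← hcov]
  have h12 : s1 * s2 ≤ 1/4 := by nlinarith
  have h13 : e * (s1 * s2) ≤ e * (1/4) := mul_le_mul_of_nonneg_left h12 he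
  linarith

lemma main_est (P : Measure Ω) [IsProbabilityMeasure P] {𝒜 𝒝 : MeasurableSpace Ω}
    (h𝒜 : 𝒜 ≤ mΩ) (h𝒝 : 𝒝 ≤ mΩ) {e : ℝ} (he0 : 0 < e) (he1 : e < 1)
    {D : Set Ω} (hD : MeasurableSet[𝒜] D) (hPD : 1 - e ≤ (P D).toReal)
    (hρ : rhoDep (ProbabilityTheory.cond P D) 𝒜 𝒝 ≤ ENNReal.ofReal e)
    {A B : Set Ω} (hA : MeasurableSet[𝒜] A) (hB : MeasurableSet[𝒝] B) :
    |(P (A ∩ B)).toReal - (P A).toReal * (P B).toReal| ≤ 4 * e := by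
  have hDm : MeasurableSet[mΩ] D := h𝒜 D hD
  have hdpos : 0 < (P D).toReal := lt_of_lt_of_le (by linarith) hPD
  have hdne : P D ≠ 0 := by
    intro h; rw [h] at hdpos; simp at hdpos
  haveI : IsProbabilityMeasure (ProbabilityTheory.cond P D) :=
    ProbabilityTheory.cond_isProbabilityMeasure hdne
  have hQval : ∀ F : Set Ω, ((ProbabilityTheory.cond P D) F).toReal
      = (P (D ∩ F)).toReal / (P D).toReal := by
    intro F
    rw [ProbabilityTheory.cond_apply hDm, ENNReal.toReal_mul, ENNReal.toReal_inv,
      inv_mul_eq_div]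
  have hcore := core_rho_bound (ProbabilityTheory.cond P D) h𝒜 h𝒝 he0.le hρ hA hB
  rw [hQval, hQval, hQval] at hcore
  have hddle : (P D).toReal ≤ 1 := by
    simpa using ENNReal.toReal_mono ENNReal.one_ne_top (prob_le_one (μ := P) (s := D))
  have hsplit : ∀ F : Set Ω, (P F).toReal = (P (D ∩ F)).toReal + (P (Dᶜ ∩ F)).toReal := by
    intro F
    rw [← ENNReal.toReal_add (measure_ne_top _ _) (measure_ne_top _ _)]
    congr 1
    rw [Set.inter_comm D F, Set.inter_comm Dᶜ F, ← Set.diff_eq]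
    exact (measure_inter_add_diff (μ := P) F hDm).symm
  have hcompl : (P Dᶜ).toReal = 1 - (P D).toReal := by
    have h := measure_compl (μ := P) hDm (measure_ne_top P D)
    rw [measure_univ] at h
    rw [h, ENNReal.toReal_sub_of_le prob_le_one ENNReal.one_ne_top, ENNReal.toReal_one]
  rw [hsplit (A ∩ B), hsplit A, hsplit B]
  set dd := (P D).toReal with hdd
  set u := (P (D ∩ (A ∩ B))).toReal with hu
  set a := (P (D ∩ A)).toReal with haa
  set b := (P (D ∩ B)).toReal with hbb
  set u' := (P (Dᶜ ∩ (A ∩ B))).toReal with hu'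
  set a' := (P (Dᶜ ∩ A)).toReal with ha'
  set b' := (P (Dᶜ ∩ B)).toReal with hb'
  have hmono : ∀ s t : Set Ω, s ⊆ t → (P s).toReal ≤ (P t).toReal := fun s t hst =>
    ENNReal.toReal_mono (measure_ne_top _ _) (measure_mono hst)
  have hadd : a ≤ dd := hmono _ _ Set.inter_subset_left
  have hbdd : b ≤ dd := hmono _ _ Set.inter_subset_left
  have hcle : 1 - dd ≤ e := by linarith
  have ha'c : a' ≤ 1 - dd := hcompl ▸ hmono _ _ Set.inter_subset_left
  have hb'c : b' ≤ 1 - dd := hcompl ▸ hmono _ _ Set.inter_subset_left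
  have hu'c : u' ≤ 1 - dd := hcompl ▸ hmono _ _ Set.inter_subset_left
  have h0u : 0 ≤ u := ENNReal.toReal_nonneg
  have h0a : 0 ≤ a := ENNReal.toReal_nonneg
  have h0b : 0 ≤ b := ENNReal.toReal_nonneg
  have h0u' : 0 ≤ u' := ENNReal.toReal_nonneg
  have h0a' : 0 ≤ a' := ENNReal.toReal_nonneg
  have h0b' : 0 ≤ b' := ENNReal.toReal_nonneg
  set z := a * b / dd with hz
  have hzdd : z * dd = a * b := by
    rw [hz]; field_simp
  have hz0 : 0 ≤ z := by positivity
  have hz1 : z ≤ 1 := by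
    rw [hz, div_le_iff₀ hdpos]
    nlinarith [mul_le_mul hadd (hbdd.trans hddle) h0b hdpos.le]
  have hcore' : |u - z| ≤ dd * (e / 4) := by
    have heq : u / dd - a / dd * (b / dd) = (u - z) / dd := by
      rw [hz]; field_simp [hdpos.ne']
    rw [heq, abs_div, abs_of_pos hdpos] at hcore
    calc |u - z| = |u - z| / dd * dd := by field_simp
      _ ≤ e / 4 * dd := mul_le_mul_of_nonneg_right hcore hdpos.le
      _ = dd * (e / 4) := mul_comm _ _
  have hcore'' : |u - z| ≤ e / 4 := by
    refine hcore'.trans ?_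
    have h := mul_le_mul_of_nonneg_right hddle (by linarith : (0:ℝ) ≤ e / 4)
    linarith
  have hX : (u + u') - (a + a') * (b + b')
      = (u - z) + z * (1 - dd) + u' - a * b' - a' * b - a' * b' := by
    linear_combination hzdd
  have hzc : z * (1 - dd) ≤ e := by
    have h := mul_le_mul_of_nonneg_right hz1 (by linarith : (0:ℝ) ≤ 1 - dd)
    linarith
  have hzc0 : 0 ≤ z * (1 - dd) := mul_nonneg hz0 (by linarith)
  have hab' : a * b' ≤ e := by
    have h := mul_le_mul (hadd.trans hddle) (hb'c.trans hcle) h0b' zero_le_one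
    linarith
  have ha'b : a' * b ≤ e := by
    have h := mul_le_mul (ha'c.trans hcle) (hbdd.trans hddle) h0b he0.le
    linarith
  have ha'b' : a' * b' ≤ e := by
    have h := mul_le_mul (ha'c.trans hcle) (hb'c.trans hcle) h0b' he0.le
    nlinarith
  have hpab' : 0 ≤ a * b' := mul_nonneg h0a h0b'
  have hpa'b : 0 ≤ a' * b := mul_nonneg h0a' h0b
  have hpa'b' : 0 ≤ a' * b' := mul_nonneg h0a' h0b'
  have hu'e : u' ≤ e := hu'c.trans hcle
  obtain ⟨hl, hr⟩ := abs_le.1 hcore''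
  rw [hX, abs_le]
  constructor
  · linarith
  · linarith

end AuxProofs

/-- `α(𝒜,𝒝) ≤ 4·ρ_cond(𝒜,𝒝)`. -/
theorem alpha_le_four_rhoCond
    {Ω : Type*} {mΩ : MeasurableSpace Ω} (P : Measure Ω) [IsProbabilityMeasure P]
    (𝒜 𝒝 : MeasurableSpace Ω) (h𝒜 : 𝒜 ≤ mΩ) (h𝒝 : 𝒝 ≤ mΩ) :
    alphaDep P 𝒜 𝒝 ≤ 4 * rhoCondDep P 𝒜 𝒝 := by
  have hbound : ∀ (c : ℝ≥0∞),
      (∀ A : Set Ω, MeasurableSet[𝒜] A → ∀ B : Set Ω, MeasurableSet[𝒝] B →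
        ENNReal.ofReal |(P (A ∩ B)).toReal - (P A).toReal * (P B).toReal| ≤ c) →
      alphaDep P 𝒜 𝒝 ≤ c := by
    intro c h
    exact iSup_le fun A => iSup_le fun hA => iSup_le fun B => iSup_le fun hB => h A hA B hB
  have hkey : ∀ ε : ℝ≥0∞, ε ∈ ({1} ∪ {ε : ℝ≥0∞ | 0 < ε ∧ ε < 1 ∧ ∃ D : Set Ω,
      MeasurableSet[𝒜] D ∧ 1 - ε ≤ P D ∧
      rhoDep (ProbabilityTheory.cond P D) 𝒜 𝒝 ≤ ε} : Set ℝ≥0∞) →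
      alphaDep P 𝒜 𝒝 ≤ 4 * ε := by
    intro ε hε
    rcases hε with h1 | hmem
    · rw [Set.mem_singleton_iff.1 h1]
      refine hbound _ ?_
      intro A hA B hB
      have h01 : ∀ s : Set Ω, 0 ≤ (P s).toReal ∧ (P s).toReal ≤ 1 := fun s =>
        ⟨ENNReal.toReal_nonneg, by
          simpa using ENNReal.toReal_mono ENNReal.one_ne_top (prob_le_one (μ := P) (s := s))⟩
      have habs : |(P (A ∩ B)).toReal - (P A).toReal * (P B).toReal| ≤ 4 := by
        obtain ⟨h1a, h2a⟩ := h01 (A ∩ B)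
        obtain ⟨h1b, h2b⟩ := h01 A
        obtain ⟨h1c, h2c⟩ := h01 B
        rw [abs_le]
        constructor <;> nlinarith
      calc ENNReal.ofReal |(P (A ∩ B)).toReal - (P A).toReal * (P B).toReal|
          ≤ ENNReal.ofReal 4 := ENNReal.ofReal_le_ofReal habs
        _ = 4 * 1 := by norm_num
    · obtain ⟨hpos, hlt1, D, hD, hPD, hρ⟩ := hmem
      have hεne : ε ≠ ⊤ := (hlt1.trans ENNReal.one_lt_top).ne
      set e := ε.toReal with he
      have hεe : ε = ENNReal.ofReal e := (ENNReal.ofReal_toReal hεne).symm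
      have he0 : 0 < e := ENNReal.toReal_pos hpos.ne' hεne
      have he1 : e < 1 := by
        have := ENNReal.toReal_strict_mono ENNReal.one_ne_top hlt1
        simpa using this
      have hPD' : 1 - e ≤ (P D).toReal := by
        have h := ENNReal.toReal_mono (measure_ne_top P D) hPD
        rwa [ENNReal.toReal_sub_of_le hlt1.le ENNReal.one_ne_top, ENNReal.toReal_one] at h
      refine hbound _ ?_
      intro A hA B hB
      have hest := main_est P h𝒜 h𝒝 he0 he1 hD hPD' (by rwa [← hεe]) hA hB
      calc ENNReal.ofReal |(P (A ∩ B)).toReal - (P A).toReal * (P B).toReal|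
          ≤ ENNReal.ofReal (4 * e) := ENNReal.ofReal_le_ofReal hest
        _ = 4 * ε := by
            rw [ENNReal.ofReal_mul (by norm_num : (0:ℝ) ≤ 4), ← hεe]
            norm_num
  have hdiv : alphaDep P 𝒜 𝒝 / 4 ≤ rhoCondDep P 𝒜 𝒝 := by
    unfold rhoCondDep
    refine le_sInf fun ε hε => ?_
    rw [ENNReal.div_le_iff_le_mul (Or.inl (by norm_num)) (Or.inl (by norm_num))]
    exact (hkey ε hε).trans_eq (mul_comm 4 ε)
  calc alphaDep P 𝒜 𝒝 = 4 * (alphaDep P 𝒜 𝒝 / 4) :=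
        (ENNReal.mul_div_cancel (by norm_num) (by norm_num)).symm
    _ ≤ 4 * rhoCondDep P 𝒜 𝒝 := mul_le_mul_right hdiv 4


end StrongMixing
end
end

section
/- Let X = (X_k, k ∈ ℤ) be a strictly stationary sequence of real random variables. Then β*(n) → 0 as n → ∞ if and only if there exists an integer m ≥ 0 such that X is m-dependent. -/
open MeasureTheory ProbabilityTheory ENNReal Filter

noncomputable section

namespace StrongMixing

variable {Ω : Type*}

section Infra

open MeasurableSpace

variable {mΩ : MeasurableSpace Ω} (P : Measure Ω) (X : ℤ → Ω → ℝ)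

/-- The generating π-system of `sigmaOn X S`. -/
def piOn (X : ℤ → Ω → ℝ) : ℤ → Set (Set Ω) :=
  fun k => {s | MeasurableSet[MeasurableSpace.comap (X k) inferInstance] s}

lemma sigmaOn_eq_generateFrom (S : Set ℤ) :
    sigmaOn X S = MeasurableSpace.generateFrom (piiUnionInter (piOn X) S) :=
  (generateFrom_piiUnionInter_measurableSet
    (fun k => MeasurableSpace.comap (X k) inferInstance) S).symm

lemma comap_le_sigmaOn {S : Set ℤ} {k : ℤ} (hk : k ∈ S) :
    MeasurableSpace.comap (X k) inferInstance ≤ sigmaOn X S :=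
  le_iSup₂ (f := fun k (_ : k ∈ S) => MeasurableSpace.comap (X k) inferInstance) k hk

lemma sigmaOn_le (hX : ∀ k, Measurable (X k)) (S : Set ℤ) : sigmaOn X S ≤ mΩ :=
  iSup₂_le fun k _ => (hX k).comap_le

lemma sigmaLE_eq (j : ℤ) : sigmaLE X j = sigmaOn X (Set.Iic j) := rfl

lemma sigmaGE_eq (j : ℤ) : sigmaGE X j = sigmaOn X (Set.Ici j) := rfl

lemma measurableSet_biInter_sigmaOn {S : Set ℤ} {F : Finset ℤ} (hsub : ↑F ⊆ S)
    {f : ℤ → Set Ω}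
    (hf : ∀ k ∈ F, MeasurableSet[MeasurableSpace.comap (X k) inferInstance] (f k)) :
    MeasurableSet[sigmaOn X S] (⋂ k ∈ F, f k) :=
  Finset.measurableSet_biInter _ fun k hk => comap_le_sigmaOn X (hsub hk) _ (hf k hk)

lemma indep_sigmaOn_of_factor [IsProbabilityMeasure P] (hX : ∀ k, Measurable (X k)) (S T : Set ℤ)
    (h : ∀ t1 t2 : Set Ω, t1 ∈ piiUnionInter (piOn X) S → t2 ∈ piiUnionInter (piOn X) T →
      P (t1 ∩ t2) = P t1 * P t2) :
    ProbabilityTheory.Indep (sigmaOn X S) (sigmaOn X T) P :=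
  ProbabilityTheory.IndepSets.indep (sigmaOn_le X hX S) (sigmaOn_le X hX T)
    (isPiSystem_piiUnionInter _ (fun k => @MeasurableSpace.isPiSystem_measurableSet Ω
      (MeasurableSpace.comap (X k) inferInstance)) S)
    (isPiSystem_piiUnionInter _ (fun k => @MeasurableSpace.isPiSystem_measurableSet Ω
      (MeasurableSpace.comap (X k) inferInstance)) T)
    (sigmaOn_eq_generateFrom X S) (sigmaOn_eq_generateFrom X T)
    ((ProbabilityTheory.IndepSets_iff _ _ _).2 h)

end Infra
section MDep

variable {mΩ : MeasurableSpace Ω} (P : Measure Ω) [IsProbabilityMeasure P] (X : ℤ → Ω → ℝ)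

/-- One inductive step of the factorization: the case where the largest point lies in `G`. -/
lemma mdep_step {m : ℕ} (hmd : MDependent P X m) (F G : Finset ℤ) (f g : ℤ → Set Ω)
    (hf : ∀ k ∈ F, MeasurableSet[MeasurableSpace.comap (X k) inferInstance] (f k))
    (hg : ∀ k ∈ G, MeasurableSet[MeasurableSpace.comap (X k) inferInstance] (g k))
    (hgap : ∀ a ∈ F, ∀ b ∈ G, (m : ℤ) + 1 ≤ |a - b|)
    (hFne : F.Nonempty) (hGne : G.Nonempty)
    (hmax : F.max' hFne < G.max' hGne)
    (IH : ∀ F' G' : Finset ℤ, F'.card + G'.card < F.card + G.card →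
      (∀ k ∈ F', MeasurableSet[MeasurableSpace.comap (X k) inferInstance] (f k)) →
      (∀ k ∈ G', MeasurableSet[MeasurableSpace.comap (X k) inferInstance] (g k)) →
      (∀ a ∈ F', ∀ b ∈ G', (m : ℤ) + 1 ≤ |a - b|) →
      P ((⋂ k ∈ F', f k) ∩ ⋂ k ∈ G', g k) = P (⋂ k ∈ F', f k) * P (⋂ k ∈ G', g k)) :
    P ((⋂ k ∈ F, f k) ∩ ⋂ k ∈ G, g k) = P (⋂ k ∈ F, f k) * P (⋂ k ∈ G, g k) := by
  classical
  set j : ℤ := F.max' hFne with hj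
  have hjF : j ∈ F := F.max'_mem hFne
  set Glo : Finset ℤ := G.filter (fun b => b < j) with hGloDef
  set Ghi : Finset ℤ := G.filter (fun b => ¬ b < j) with hGhiDef
  have hGhi_mem : ∀ b ∈ Ghi, j + ((m : ℤ) + 1) ≤ b := by
    intro b hb
    rw [hGhiDef, Finset.mem_filter] at hb
    have hgapb := hgap j hjF b hb.1
    have hb2 := hb.2
    rcases le_abs.mp hgapb with h | h <;> omega
  have hGlo_mem : ∀ b ∈ Glo, b ≤ j - ((m : ℤ) + 1) := by
    intro b hb
    rw [hGloDef, Finset.mem_filter] at hb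
    have hgapb := hgap j hjF b hb.1
    have hb2 := hb.2
    rcases le_abs.mp hgapb with h | h <;> omega
  have hGhi_ne : Ghi.Nonempty := by
    refine ⟨G.max' hGne, ?_⟩
    rw [hGhiDef, Finset.mem_filter]
    exact ⟨G.max'_mem hGne, by omega⟩
  have hGsplit : (⋂ k ∈ G, g k) = (⋂ k ∈ Glo, g k) ∩ ⋂ k ∈ Ghi, g k := by
    ext ω
    simp only [Set.mem_inter_iff, Set.mem_iInter, hGloDef, hGhiDef, Finset.mem_filter]
    constructor
    · intro h
      exact ⟨fun k hk => h k hk.1, fun k hk => h k hk.1⟩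
    · intro h k hk
      by_cases hlt : k < j
      · exact h.1 k ⟨hk, hlt⟩
      · exact h.2 k ⟨hk, hlt⟩
  -- membership of events in the relevant σ-fields
  have hmemF : MeasurableSet[sigmaLE X j] (⋂ k ∈ F, f k) := by
    rw [sigmaLE_eq]
    exact measurableSet_biInter_sigmaOn X (fun k hk => F.le_max' k hk) hf
  have hmemGlo' : ∀ (j' : ℤ), (∀ b ∈ Glo, b ≤ j') → MeasurableSet[sigmaLE X j'] (⋂ k ∈ Glo, g k) := by
    intro j' hle
    rw [sigmaLE_eq]
    exact measurableSet_biInter_sigmaOn X (fun k hk => hle k hk)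
      (fun k hk => hg k (Finset.mem_of_mem_filter k hk))
  have hmemGhi' : ∀ (j' : ℤ), (∀ b ∈ Ghi, j' ≤ b) → MeasurableSet[sigmaGE X j'] (⋂ k ∈ Ghi, g k) := by
    intro j' hle
    rw [sigmaGE_eq]
    exact measurableSet_biInter_sigmaOn X (fun k hk => hle k hk)
      (fun k hk => hg k (Finset.mem_of_mem_filter k hk))
  -- Step 1 : split off the top block
  have hstep1 : P ((⋂ k ∈ F, f k) ∩ (⋂ k ∈ Glo, g k) ∩ ⋂ k ∈ Ghi, g k)
      = P ((⋂ k ∈ F, f k) ∩ ⋂ k ∈ Glo, g k) * P (⋂ k ∈ Ghi, g k) := by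
    refine (ProbabilityTheory.Indep_iff _ _ _).1 (hmd j) _ _ ?_ ?_
    · exact (hmemF.inter (hmemGlo' j (fun b hb => le_of_lt
        (by rw [hGloDef, Finset.mem_filter] at hb; exact hb.2))))
    · exact hmemGhi' _ (fun b hb => by have := hGhi_mem b hb; omega)
  -- Step 2 : induction hypothesis on (F, Glo)
  have hcard : F.card + Glo.card < F.card + G.card := by
    have : Glo.card < G.card := by
      refine Finset.card_lt_card ⟨Finset.filter_subset _ _, fun hsub => ?_⟩
      have h1 := hsub (G.max'_mem hGne)
      rw [hGloDef, Finset.mem_filter] at h1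
      omega
    omega
  have hstep2 : P ((⋂ k ∈ F, f k) ∩ ⋂ k ∈ Glo, g k)
      = P (⋂ k ∈ F, f k) * P (⋂ k ∈ Glo, g k) :=
    IH F Glo hcard hf (fun k hk => hg k (Finset.mem_of_mem_filter k hk))
      (fun a ha b hb => hgap a ha b (Finset.mem_of_mem_filter b hb))
  -- Step 3 : Glo and Ghi are independent
  have hstep3 : P ((⋂ k ∈ Glo, g k) ∩ ⋂ k ∈ Ghi, g k)
      = P (⋂ k ∈ Glo, g k) * P (⋂ k ∈ Ghi, g k) := by
    have hj' : j - ((m : ℤ) + 1) + (m : ℤ) + 1 = j := by ring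
    refine (ProbabilityTheory.Indep_iff _ _ _).1 (hmd (j - ((m : ℤ) + 1))) _ _ ?_ ?_
    · exact hmemGlo' _ (fun b hb => hGlo_mem b hb)
    · rw [hj']
      exact hmemGhi' _ (fun b hb => by have := hGhi_mem b hb; omega)
  calc P ((⋂ k ∈ F, f k) ∩ ⋂ k ∈ G, g k)
      = P ((⋂ k ∈ F, f k) ∩ (⋂ k ∈ Glo, g k) ∩ ⋂ k ∈ Ghi, g k) := by
        rw [hGsplit, Set.inter_assoc]
    _ = P (⋂ k ∈ F, f k) * P (⋂ k ∈ Glo, g k) * P (⋂ k ∈ Ghi, g k) := by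
        rw [hstep1, hstep2]
    _ = P (⋂ k ∈ F, f k) * P (⋂ k ∈ G, g k) := by
        rw [hGsplit, hstep3, mul_assoc]

end MDep
section MDep2

set_option linter.unusedSectionVars false

variable {mΩ : MeasurableSpace Ω} (P : Measure Ω) [IsProbabilityMeasure P] (X : ℤ → Ω → ℝ)

lemma mdep_factor {m : ℕ} (hmd : MDependent P X m) :
    ∀ n : ℕ, ∀ F G : Finset ℤ, ∀ f g : ℤ → Set Ω, F.card + G.card ≤ n →
    (∀ k ∈ F, MeasurableSet[MeasurableSpace.comap (X k) inferInstance] (f k)) →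
    (∀ k ∈ G, MeasurableSet[MeasurableSpace.comap (X k) inferInstance] (g k)) →
    (∀ a ∈ F, ∀ b ∈ G, (m : ℤ) + 1 ≤ |a - b|) →
    P ((⋂ k ∈ F, f k) ∩ ⋂ k ∈ G, g k) = P (⋂ k ∈ F, f k) * P (⋂ k ∈ G, g k) := by
  intro n
  induction n with
  | zero =>
    intro F G f g hcard hf hg hgap
    have hF : F = ∅ := Finset.card_eq_zero.1 (by omega)
    subst hF
    simp
  | succ n IH =>
    intro F G f g hcard hf hg hgap
    rcases F.eq_empty_or_nonempty with rfl | hFne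
    · simp
    rcases G.eq_empty_or_nonempty with rfl | hGne
    · simp
    have hne : F.max' hFne ≠ G.max' hGne := by
      intro heq
      have := hgap _ (F.max'_mem hFne) _ (G.max'_mem hGne)
      rw [heq] at this
      simp at this
      omega
    rcases lt_or_gt_of_ne hne with hlt | hgt
    · exact mdep_step P X hmd F G f g hf hg hgap hFne hGne hlt
        (fun F' G' hc hf' hg' hgap' => IH F' G' f g (by omega) hf' hg' hgap')
    · rw [Set.inter_comm, mul_comm]
      exact mdep_step P X hmd G F g f hg hf
        (fun a ha b hb => by rw [abs_sub_comm]; exact hgap b hb a ha) hGne hFne hgt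
        (fun F' G' hc hf' hg' hgap' => by
          rw [Set.inter_comm, mul_comm]
          exact IH G' F' f g (by omega) hg' hf'
            (fun a ha b hb => by rw [abs_sub_comm]; exact hgap' b hb a ha))

lemma indep_sigmaOn_of_mdep (hX : ∀ k, Measurable (X k)) {m : ℕ} (hmd : MDependent P X m)
    (S T : Set ℤ) (hgap : ∀ s ∈ S, ∀ t ∈ T, (m : ℤ) + 1 ≤ |s - t|) :
    ProbabilityTheory.Indep (sigmaOn X S) (sigmaOn X T) P := by
  refine indep_sigmaOn_of_factor P X hX S T ?_
  rintro t1 t2 ⟨F, hFS, f, hf, rfl⟩ ⟨G, hGT, g, hg, rfl⟩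
  exact mdep_factor P X hmd (F.card + G.card) F G f g le_rfl
    (fun k hk => hf k hk) (fun k hk => hg k hk)
    (fun a ha b hb => hgap a (hFS ha) b (hGT hb))

lemma betaDep_eq_zero_of_indep {𝒜 𝒝 : MeasurableSpace Ω}
    (h : ProbabilityTheory.Indep 𝒜 𝒝 P) : betaDep P 𝒜 𝒝 = 0 := by
  refine le_antisymm ?_ (zero_le)
  refine iSup_le fun I => iSup_le fun J => iSup_le fun A => iSup_le fun B =>
    iSup_le fun hA => iSup_le fun hB => ?_
  have hzero : ∀ (i : Fin I) (j : Fin J),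
      (P (A i ∩ B j)).toReal - (P (A i)).toReal * (P (B j)).toReal = 0 := by
    intro i j
    rw [(ProbabilityTheory.Indep_iff _ _ _).1 h _ _ (hA.1 i) (hB.1 j), ENNReal.toReal_mul]
    ring
  simp [hzero]

lemma betaStarSeq_eq_zero (hX : ∀ k, Measurable (X k)) {m n : ℕ} (hmd : MDependent P X m)
    (hn : m + 1 ≤ n) : betaStarSeq P X n = 0 := by
  refine le_antisymm ?_ (zero_le)
  refine iSup_le fun S => iSup_le fun T => iSup_le fun hS => iSup_le fun hT =>
    iSup_le fun hdisj => iSup_le fun hgap => ?_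
  refine le_of_eq (betaDep_eq_zero_of_indep P ?_)
  refine indep_sigmaOn_of_mdep P X hX hmd S T ?_
  intro s hs t ht
  have h1 := hgap s hs t ht
  have h2 : (m : ℤ) + 1 ≤ (n : ℤ) := by exact_mod_cast hn
  omega

lemma tendsto_of_mdep (hX : ∀ k, Measurable (X k)) {m : ℕ} (hmd : MDependent P X m) :
    Tendsto (fun n : ℕ => betaStarSeq P X n) atTop (nhds 0) := by
  have hev : (fun _ : ℕ => (0 : ℝ≥0∞)) =ᶠ[atTop] fun n => betaStarSeq P X n :=
    eventually_atTop.2 ⟨m + 1, fun n hn => (betaStarSeq_eq_zero P X hX hmd hn).symm⟩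
  exact Tendsto.congr' hev tendsto_const_nhds

end MDep2
section Shift

set_option linter.unusedSectionVars false

variable {mΩ : MeasurableSpace Ω} (P : Measure Ω) [IsProbabilityMeasure P] (X : ℤ → Ω → ℝ)

lemma sigmaOn_mono {S T : Set ℤ} (h : S ⊆ T) : sigmaOn X S ≤ sigmaOn X T :=
  iSup₂_le fun k hk => comap_le_sigmaOn X (h hk)

lemma shift_measure (hX : ∀ k, Measurable (X k)) (hstat : StrictlyStationary P X)
    {W : Set (ℤ → ℝ)} (hW : MeasurableSet W) (t : ℤ) :
    P ((fun ω => fun k => X (k + t) ω) ⁻¹' W) = P ((fun ω => fun k => X k ω) ⁻¹' W) := by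
  have h1 : Measurable (fun ω => fun k => X k ω) := measurable_pi_lambda _ fun k => hX k
  have h2 : Measurable (fun ω => fun k => X (k + t) ω) :=
    measurable_pi_lambda _ fun k => hX (k + t)
  rw [← Measure.map_apply h1 hW, ← Measure.map_apply h2 hW, hstat t]

lemma le_betaDep {𝒜 𝒝 : MeasurableSpace Ω} {I J : ℕ} {A : Fin I → Set Ω} {B : Fin J → Set Ω}
    (hA : IsPartition 𝒜 A) (hB : IsPartition 𝒝 B) :
    ENNReal.ofReal ((1 / 2) * ∑ i, ∑ j,
        |(P (A i ∩ B j)).toReal - (P (A i)).toReal * (P (B j)).toReal|) ≤ betaDep P 𝒜 𝒝 :=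
  le_iSup_of_le I <| le_iSup_of_le J <| le_iSup_of_le A <| le_iSup_of_le B <|
    le_iSup_of_le hA <| le_iSup_of_le hB le_rfl

lemma le_betaStarSeq {N : ℕ} {S T : Set ℤ} (hS : S.Nonempty) (hT : T.Nonempty)
    (hdisj : Disjoint S T) (hgap : ∀ s ∈ S, ∀ t ∈ T, (N : ℤ) ≤ |s - t|) :
    betaDep P (sigmaOn X S) (sigmaOn X T) ≤ betaStarSeq P X N :=
  le_iSup_of_le S <| le_iSup_of_le T <| le_iSup_of_le hS <| le_iSup_of_le hT <|
    le_iSup_of_le hdisj <| le_iSup_of_le hgap le_rfl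

lemma toReal_inter_add (U V : Set Ω) (hV : MeasurableSet V) :
    (P (U ∩ V)).toReal + (P (U ∩ Vᶜ)).toReal = (P U).toReal := by
  rw [← ENNReal.toReal_add (measure_ne_top P _) (measure_ne_top P _), ← Set.diff_eq,
    measure_inter_add_diff U hV]

lemma toReal_compl (U : Set Ω) (hU : MeasurableSet U) :
    (P Uᶜ).toReal = 1 - (P U).toReal := by
  have h := measure_add_measure_compl (μ := P) hU
  have h2 := congrArg ENNReal.toReal h
  rw [ENNReal.toReal_add (measure_ne_top P _) (measure_ne_top P _)] at h2
  simp only [measure_univ, ENNReal.toReal_one] at h2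
  linarith

/-- Lower bound for `β*` by the covariance of two events over interlaced index sets. -/
lemma abs_cov_le_betaStar (hX : ∀ k, Measurable (X k)) {N : ℕ} {S T : Set ℤ}
    (hS : S.Nonempty) (hT : T.Nonempty) (hdisj : Disjoint S T)
    (hgap : ∀ s ∈ S, ∀ t ∈ T, (N : ℤ) ≤ |s - t|)
    {U V : Set Ω} (hU : MeasurableSet[sigmaOn X S] U) (hV : MeasurableSet[sigmaOn X T] V) :
    ENNReal.ofReal (2 * |(P (U ∩ V)).toReal - (P U).toReal * (P V).toReal|)
      ≤ betaStarSeq P X N := by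
  have hUm : MeasurableSet U := sigmaOn_le X hX S _ hU
  have hVm : MeasurableSet V := sigmaOn_le X hX T _ hV
  set A : Fin 2 → Set Ω := fun i => if i = 0 then U else Uᶜ with hA
  set B : Fin 2 → Set Ω := fun i => if i = 0 then V else Vᶜ with hB
  have hPA : IsPartition (sigmaOn X S) A := by
    refine ⟨fun i => ?_, fun i j hij => ?_, ?_⟩
    · fin_cases i
      · simpa [hA] using hU
      · simpa [hA] using hU.compl
    · fin_cases i <;> fin_cases j <;> simp_all [Function.onFun, hA] <;>
        first
          | exact disjoint_compl_right
          | exact disjoint_compl_left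
    · ext ω
      simp only [Set.mem_iUnion, Set.mem_univ, iff_true]
      by_cases h : ω ∈ U
      · exact ⟨0, by simpa [hA] using h⟩
      · exact ⟨1, by simpa [hA] using h⟩
  have hPB : IsPartition (sigmaOn X T) B := by
    refine ⟨fun i => ?_, fun i j hij => ?_, ?_⟩
    · fin_cases i
      · simpa [hB] using hV
      · simpa [hB] using hV.compl
    · fin_cases i <;> fin_cases j <;> simp_all [Function.onFun, hB] <;>
        first
          | exact disjoint_compl_right
          | exact disjoint_compl_left
    · ext ω
      simp only [Set.mem_iUnion, Set.mem_univ, iff_true]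
      by_cases h : ω ∈ V
      · exact ⟨0, by simpa [hB] using h⟩
      · exact ⟨1, by simpa [hB] using h⟩
  have key : (1 / 2 : ℝ) * ∑ i, ∑ j,
      |(P (A i ∩ B j)).toReal - (P (A i)).toReal * (P (B j)).toReal|
      = 2 * |(P (U ∩ V)).toReal - (P U).toReal * (P V).toReal| := by
    have h1 : (P (U ∩ V)).toReal + (P (U ∩ Vᶜ)).toReal = (P U).toReal :=
      toReal_inter_add P U V hVm
    have h2 : (P (Uᶜ ∩ V)).toReal + (P (Uᶜ ∩ Vᶜ)).toReal = (P Uᶜ).toReal :=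
      toReal_inter_add P Uᶜ V hVm
    have h3 : (P (V ∩ U)).toReal + (P (V ∩ Uᶜ)).toReal = (P V).toReal :=
      toReal_inter_add P V U hUm
    have h4 : (P Uᶜ).toReal = 1 - (P U).toReal := toReal_compl P U hUm
    have h5 : (P Vᶜ).toReal = 1 - (P V).toReal := toReal_compl P V hVm
    have hc1 : (P (V ∩ U)).toReal = (P (U ∩ V)).toReal := by rw [Set.inter_comm]
    have hc2 : (P (V ∩ Uᶜ)).toReal = (P (Uᶜ ∩ V)).toReal := by rw [Set.inter_comm]
    rw [Fin.sum_univ_two, Fin.sum_univ_two, Fin.sum_univ_two]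
    simp only [hA, hB]
    norm_num
    rw [hc1, hc2] at h3
    have e2 : (P (U ∩ Vᶜ)).toReal - (P U).toReal * (P Vᶜ).toReal
        = -((P (U ∩ V)).toReal - (P U).toReal * (P V).toReal) := by
      rw [h5]; linarith
    have e3 : (P (Uᶜ ∩ V)).toReal - (P Uᶜ).toReal * (P V).toReal
        = -((P (U ∩ V)).toReal - (P U).toReal * (P V).toReal) := by
      rw [h4]; linarith
    have e4 : (P (Uᶜ ∩ Vᶜ)).toReal - (P Uᶜ).toReal * (P Vᶜ).toReal
        = (P (U ∩ V)).toReal - (P U).toReal * (P V).toReal := by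
      rw [h4, h5]; nlinarith [h1, h2, h3]
    rw [e2, e3, e4, abs_neg]
    ring
  calc ENNReal.ofReal (2 * |(P (U ∩ V)).toReal - (P U).toReal * (P V).toReal|)
      = ENNReal.ofReal ((1 / 2) * ∑ i, ∑ j,
          |(P (A i ∩ B j)).toReal - (P (A i)).toReal * (P (B j)).toReal|) := by rw [key]
    _ ≤ betaDep P (sigmaOn X S) (sigmaOn X T) := le_betaDep P hPA hPB
    _ ≤ betaStarSeq P X N := le_betaStarSeq P X hS hT hdisj hgap

end Shift
section Signature

set_option linter.unusedSectionVars false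

variable {mΩ : MeasurableSpace Ω} (P : Measure Ω) [IsProbabilityMeasure P]

/-- An event or its complement, according to a boolean. -/
def pcs (b : Bool) (U : Set Ω) : Set Ω := if b then U else Uᶜ

/-- The cell of the partition generated by `A` indexed by a sign pattern `s`. -/
def cellOf {K : ℕ} (A : Fin K → Set Ω) (s : Fin K → Bool) : Set Ω :=
  ⋂ i, pcs (s i) (A i)

/-- The signature of a point w.r.t. a family of sets. -/
noncomputable def sigf {K : ℕ} (A : Fin K → Set Ω) (ω : Ω) : Fin K → Bool :=
  fun i => @decide (ω ∈ A i) (Classical.dec _)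

lemma mem_cellOf {K : ℕ} {A : Fin K → Set Ω} {s : Fin K → Bool} {ω : Ω} :
    ω ∈ cellOf A s ↔ sigf A ω = s := by
  simp only [cellOf, Set.mem_iInter, funext_iff, sigf]
  refine forall_congr' fun i => ?_
  cases hsi : s i <;> simp [pcs, hsi]

lemma measurableSet_cellOf {m : MeasurableSpace Ω} {K : ℕ} {A : Fin K → Set Ω}
    (hA : ∀ i, MeasurableSet[m] (A i)) (s : Fin K → Bool) :
    MeasurableSet[m] (cellOf A s) := by
  refine MeasurableSet.iInter fun i => ?_
  cases hsi : s i <;> simp only [pcs, hsi]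
  · exact (hA i).compl
  · simpa using hA i

lemma cellOf_disjoint {K : ℕ} {A : Fin K → Set Ω} {s t : Fin K → Bool} (hst : s ≠ t) :
    Disjoint (cellOf A s) (cellOf A t) := by
  rw [Set.disjoint_left]
  intro ω hs ht
  exact hst ((mem_cellOf.1 hs).symm.trans (mem_cellOf.1 ht))

lemma mem_cellOf_sigf {K : ℕ} {A : Fin K → Set Ω} (ω : Ω) : ω ∈ cellOf A (sigf A ω) :=
  mem_cellOf.2 rfl

/-- Sum over a set of joint sign patterns of the joint cell probabilities. -/
lemma sum_cell_filter {K : ℕ} (A B : Fin K → Set Ω)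
    (hA : ∀ i, MeasurableSet (A i)) (hB : ∀ i, MeasurableSet (B i))
    (Q : ((Fin K → Bool) × (Fin K → Bool)) → Prop) [DecidablePred Q] :
    ∑ st ∈ Finset.univ.filter Q, (P (cellOf A st.1 ∩ cellOf B st.2)).toReal
      = (P {ω | Q (sigf A ω, sigf B ω)}).toReal := by
  have hpre : ∀ st : (Fin K → Bool) × (Fin K → Bool),
      cellOf A st.1 ∩ cellOf B st.2 = (fun ω => (sigf A ω, sigf B ω)) ⁻¹' {st} := by
    intro st
    ext ω
    simp [mem_cellOf, Prod.ext_iff, Set.mem_preimage]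
  have hset : {ω | Q (sigf A ω, sigf B ω)}
      = ⋃ st ∈ Finset.univ.filter Q, cellOf A st.1 ∩ cellOf B st.2 := by
    ext ω
    simp only [Set.mem_setOf_eq, Set.mem_iUnion, hpre, Set.mem_preimage,
      Set.mem_singleton_iff, Finset.mem_filter, Finset.mem_univ, true_and]
    constructor
    · intro h
      exact ⟨(sigf A ω, sigf B ω), h, rfl⟩
    · rintro ⟨st, hQst, rfl⟩
      exact hQst
  rw [hset, measure_biUnion_finset ?_ ?_, ENNReal.toReal_sum (fun _ _ => measure_ne_top P _)]
  · intro s hs t ht hst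
    simp only [Function.onFun]
    rw [hpre, hpre]
    refine Set.disjoint_left.2 fun ω h1 h2 => ?_
    simp only [Set.mem_preimage, Set.mem_singleton_iff] at h1 h2
    exact hst (h1.symm.trans h2)
  · intro st _
    exact (measurableSet_cellOf hA st.1).inter (measurableSet_cellOf hB st.2)

/-- Single-family version. -/
lemma sum_cell_filter_one {K : ℕ} (A : Fin K → Set Ω) (hA : ∀ i, MeasurableSet (A i))
    (Q : (Fin K → Bool) → Prop) [DecidablePred Q] :
    ∑ s ∈ Finset.univ.filter Q, (P (cellOf A s)).toReal = (P {ω | Q (sigf A ω)}).toReal := by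
  have hpre : ∀ s : Fin K → Bool, cellOf A s = (fun ω => sigf A ω) ⁻¹' {s} := by
    intro s
    ext ω
    simp [mem_cellOf, Set.mem_preimage]
  have hset : {ω | Q (sigf A ω)} = ⋃ s ∈ Finset.univ.filter Q, cellOf A s := by
    ext ω
    simp only [Set.mem_setOf_eq, Set.mem_iUnion, hpre, Set.mem_preimage,
      Set.mem_singleton_iff, Finset.mem_filter, Finset.mem_univ, true_and]
    constructor
    · intro h
      exact ⟨sigf A ω, h, rfl⟩
    · rintro ⟨s, hQs, rfl⟩
      exact hQs
  rw [hset, measure_biUnion_finset ?_ ?_, ENNReal.toReal_sum (fun _ _ => measure_ne_top P _)]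
  · intro s hs t ht hst
    simp only [Function.onFun]
    exact cellOf_disjoint hst
  · intro s _
    exact measurableSet_cellOf hA s

end Signature
section Cheb

/-- Joint coordinate indicator of a pair of sign patterns. -/
def chiJ {K : ℕ} (i : Fin K) (st : (Fin K → Bool) × (Fin K → Bool)) : ℝ :=
  if st.1 i = true ∧ st.2 i = true then 1 else 0

lemma chiJ_sq {K : ℕ} (i : Fin K) (st : (Fin K → Bool) × (Fin K → Bool)) :
    chiJ i st * chiJ i st = chiJ i st := by
  unfold chiJ
  by_cases h : st.1 i = true ∧ st.2 i = true <;> simp [h]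

/-- A Chebyshev-type bound for weights on pairs of sign patterns. -/
lemma cheb {K : ℕ} (w : ((Fin K → Bool) × (Fin K → Bool)) → ℝ)
    (hw0 : ∀ st, 0 ≤ w st) (hw1 : ∑ st, w st = 1)
    {μ d τ : ℝ} (hτ : 0 < τ) (hμ0 : 0 ≤ μ) (hμ1 : μ ≤ 1) (hd : 0 ≤ d)
    (hmean : ∀ i, ∑ st, w st * chiJ i st = μ)
    (hpair : ∀ i i' : Fin K, i ≠ i' → ∑ st, w st * (chiJ i st * chiJ i' st) ≤ μ ^ 2 + d)
    (Q : ((Fin K → Bool) × (Fin K → Bool)) → Prop) [DecidablePred Q]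
    (hQ : ∀ st, Q st → τ ≤ |(∑ i, chiJ i st) - K * μ|) :
    ∑ st ∈ Finset.univ.filter Q, w st ≤ (K / 4 + K ^ 2 * d) / τ ^ 2 := by
  have key : ∑ st, w st * ((∑ i, chiJ i st) - K * μ) ^ 2 ≤ K / 4 + K ^ 2 * d := by
    have expand : ∀ st : (Fin K → Bool) × (Fin K → Bool), ((∑ i, chiJ i st) - K * μ) ^ 2
        = ∑ i, ∑ i', (chiJ i st - μ) * (chiJ i' st - μ) := by
      intro st
      rw [← Finset.sum_mul_sum]
      have h : (∑ i, chiJ i st) - (K : ℝ) * μ = ∑ i, (chiJ i st - μ) := by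
        rw [Finset.sum_sub_distrib, Finset.sum_const, Finset.card_univ, Fintype.card_fin]
        push_cast
        ring
      rw [h]
      ring
    calc ∑ st, w st * ((∑ i, chiJ i st) - K * μ) ^ 2
        = ∑ i : Fin K, ∑ i' : Fin K, ∑ st, w st * ((chiJ i st - μ) * (chiJ i' st - μ)) := by
          simp_rw [expand, Finset.mul_sum]
          rw [Finset.sum_comm]
          refine Finset.sum_congr rfl fun i _ => ?_
          rw [Finset.sum_comm]
      _ ≤ ∑ i : Fin K, ∑ i' : Fin K, ((1 / 4 : ℝ) * (if i = i' then 1 else 0) + d) := by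
          refine Finset.sum_le_sum fun i _ => Finset.sum_le_sum fun i' _ => ?_
          have hinner : ∑ st, w st * ((chiJ i st - μ) * (chiJ i' st - μ))
              = (∑ st, w st * (chiJ i st * chiJ i' st)) - μ * (∑ st, w st * chiJ i st)
                - μ * (∑ st, w st * chiJ i' st) + μ ^ 2 * (∑ st, w st) := by
            rw [Finset.mul_sum, Finset.mul_sum, Finset.mul_sum, ← Finset.sum_sub_distrib,
              ← Finset.sum_sub_distrib, ← Finset.sum_add_distrib]
            exact Finset.sum_congr rfl fun st _ => by ring
          rw [hinner, hmean i, hmean i', hw1]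
          by_cases hii : i = i'
          · subst hii
            have hsq : ∑ st, w st * (chiJ i st * chiJ i st) = μ := by
              rw [← hmean i]
              exact Finset.sum_congr rfl fun st _ => by rw [chiJ_sq]
            rw [hsq, if_pos rfl]
            nlinarith [sq_nonneg (1 / 2 - μ), hd]
          · have hp := hpair i i' hii
            rw [if_neg hii]
            nlinarith
      _ = K / 4 + K ^ 2 * d := by
          have hrow : ∀ i : Fin K, ∑ i' : Fin K, ((1 / 4 : ℝ) * (if i = i' then 1 else 0) + d)
              = 1 / 4 + K * d := by
            intro i
            rw [Finset.sum_add_distrib, ← Finset.mul_sum, Finset.sum_ite_eq,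
              if_pos (Finset.mem_univ i), Finset.sum_const, Finset.card_univ, Fintype.card_fin]
            simp [nsmul_eq_mul]
          rw [Finset.sum_congr rfl fun i _ => hrow i, Finset.sum_const, Finset.card_univ,
            Fintype.card_fin, nsmul_eq_mul]
          ring
  have step1 : τ ^ 2 * ∑ st ∈ Finset.univ.filter Q, w st
      ≤ ∑ st, w st * ((∑ i, chiJ i st) - K * μ) ^ 2 := by
    calc τ ^ 2 * ∑ st ∈ Finset.univ.filter Q, w st
        = ∑ st ∈ Finset.univ.filter Q, τ ^ 2 * w st := by rw [Finset.mul_sum]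
      _ ≤ ∑ st ∈ Finset.univ.filter Q, w st * ((∑ i, chiJ i st) - K * μ) ^ 2 := by
          refine Finset.sum_le_sum fun st hst => ?_
          have h := hQ st (Finset.mem_filter.1 hst).2
          have h2 : τ ^ 2 ≤ ((∑ i, chiJ i st) - K * μ) ^ 2 := by
            have h3 := sq_abs ((∑ i, chiJ i st) - K * μ)
            nlinarith [abs_nonneg ((∑ i, chiJ i st) - K * μ)]
          nlinarith [hw0 st]
      _ ≤ ∑ st, w st * ((∑ i, chiJ i st) - K * μ) ^ 2 := by
          refine Finset.sum_le_sum_of_subset_of_nonneg (Finset.filter_subset _ _)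
            fun st _ _ => mul_nonneg (hw0 st) (sq_nonneg _)
  rw [le_div_iff₀ (by positivity)]
  nlinarith [key, step1]

end Cheb
section Moments

set_option linter.unusedSectionVars false

variable {mΩ : MeasurableSpace Ω} (P : Measure Ω) [IsProbabilityMeasure P]

lemma sum_cell_one {K : ℕ} (A B : Fin K → Set Ω)
    (hA : ∀ i, MeasurableSet (A i)) (hB : ∀ i, MeasurableSet (B i)) :
    ∑ st : (Fin K → Bool) × (Fin K → Bool), (P (cellOf A st.1 ∩ cellOf B st.2)).toReal = 1 := by
  classical
  have h := sum_cell_filter P A B hA hB (fun _ => True)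
  simpa using h

lemma sum_cell_one' {K : ℕ} (A : Fin K → Set Ω) (hA : ∀ i, MeasurableSet (A i)) :
    ∑ s : Fin K → Bool, (P (cellOf A s)).toReal = 1 := by
  classical
  have h := sum_cell_filter_one P A hA (fun _ => True)
  simpa using h

lemma moment_one {K : ℕ} (A B : Fin K → Set Ω)
    (hA : ∀ i, MeasurableSet (A i)) (hB : ∀ i, MeasurableSet (B i)) (i : Fin K) :
    ∑ st : (Fin K → Bool) × (Fin K → Bool),
      (P (cellOf A st.1 ∩ cellOf B st.2)).toReal * chiJ i st = (P (A i ∩ B i)).toReal := by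
  classical
  have h := sum_cell_filter P A B hA hB (fun st => st.1 i = true ∧ st.2 i = true)
  rw [Finset.sum_filter] at h
  have hset : {ω | sigf A ω i = true ∧ sigf B ω i = true} = A i ∩ B i := by
    ext ω
    simp [sigf]
  rw [hset] at h
  rw [← h]
  refine Finset.sum_congr rfl fun st _ => ?_
  unfold chiJ
  by_cases hst : st.1 i = true ∧ st.2 i = true <;> simp [hst]

lemma moment_two {K : ℕ} (A B : Fin K → Set Ω)
    (hA : ∀ i, MeasurableSet (A i)) (hB : ∀ i, MeasurableSet (B i)) (i i' : Fin K) :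
    ∑ st : (Fin K → Bool) × (Fin K → Bool),
      (P (cellOf A st.1 ∩ cellOf B st.2)).toReal * (chiJ i st * chiJ i' st)
      = (P ((A i ∩ B i) ∩ (A i' ∩ B i'))).toReal := by
  classical
  have h := sum_cell_filter P A B hA hB
    (fun st => (st.1 i = true ∧ st.2 i = true) ∧ (st.1 i' = true ∧ st.2 i' = true))
  rw [Finset.sum_filter] at h
  have hset : {ω | (sigf A ω i = true ∧ sigf B ω i = true)
      ∧ (sigf A ω i' = true ∧ sigf B ω i' = true)} = (A i ∩ B i) ∩ (A i' ∩ B i') := by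
    ext ω
    simp [sigf]
    tauto
  rw [hset] at h
  rw [← h]
  refine Finset.sum_congr rfl fun st _ => ?_
  unfold chiJ
  by_cases h1 : st.1 i = true ∧ st.2 i = true <;>
    by_cases h2 : st.1 i' = true ∧ st.2 i' = true <;> simp [h1, h2]

lemma moment_one' {K : ℕ} (A : Fin K → Set Ω) (hA : ∀ i, MeasurableSet (A i)) (i : Fin K) :
    ∑ s : Fin K → Bool, (P (cellOf A s)).toReal * (if s i = true then (1 : ℝ) else 0)
      = (P (A i)).toReal := by
  classical
  have h := sum_cell_filter_one P A hA (fun s => s i = true)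
  rw [Finset.sum_filter] at h
  have hset : {ω | sigf A ω i = true} = A i := by
    ext ω
    simp [sigf]
  rw [hset] at h
  rw [← h]
  refine Finset.sum_congr rfl fun s _ => ?_
  by_cases hs : s i = true <;> simp [hs]

lemma moment_two' {K : ℕ} (A : Fin K → Set Ω) (hA : ∀ i, MeasurableSet (A i)) (i i' : Fin K) :
    ∑ s : Fin K → Bool, (P (cellOf A s)).toReal
        * ((if s i = true then (1 : ℝ) else 0) * (if s i' = true then (1 : ℝ) else 0))
      = (P (A i ∩ A i')).toReal := by
  classical
  have h := sum_cell_filter_one P A hA (fun s => s i = true ∧ s i' = true)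
  rw [Finset.sum_filter] at h
  have hset : {ω | sigf A ω i = true ∧ sigf A ω i' = true} = A i ∩ A i' := by
    ext ω
    simp [sigf]
  rw [hset] at h
  rw [← h]
  refine Finset.sum_congr rfl fun s _ => ?_
  by_cases h1 : s i = true <;> by_cases h2 : s i' = true <;> simp [h1, h2]

lemma chiJ_eq_mul {K : ℕ} (i : Fin K) (st : (Fin K → Bool) × (Fin K → Bool)) :
    chiJ i st = (if st.1 i = true then (1 : ℝ) else 0) * (if st.2 i = true then (1 : ℝ) else 0) := by
  unfold chiJ
  by_cases h1 : st.1 i = true <;> by_cases h2 : st.2 i = true <;> simp [h1, h2]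

end Moments

section Extract

set_option linter.unusedSectionVars false

variable {mΩ : MeasurableSpace Ω} (P : Measure Ω) [IsProbabilityMeasure P] (X : ℤ → Ω → ℝ)

lemma exists_corr_events (hX : ∀ k, Measurable (X k)) {j nz : ℤ}
    (hni : ¬ ProbabilityTheory.Indep (sigmaOn X (Set.Iic j)) (sigmaOn X (Set.Ici nz)) P) :
    ∃ (F G : Finset ℤ) (f g : ℤ → Set ℝ),
      (∀ k, MeasurableSet (f k)) ∧ (∀ k, MeasurableSet (g k)) ∧
      (↑F ⊆ Set.Iic j) ∧ (↑G ⊆ Set.Ici nz) ∧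
      P ((⋂ k ∈ F, X k ⁻¹' f k) ∩ ⋂ k ∈ G, X k ⁻¹' g k)
        ≠ P (⋂ k ∈ F, X k ⁻¹' f k) * P (⋂ k ∈ G, X k ⁻¹' g k) := by
  classical
  by_contra hcon
  push_neg at hcon
  apply hni
  refine indep_sigmaOn_of_factor P X hX _ _ ?_
  rintro t1 t2 ⟨F, hFS, f, hf, rfl⟩ ⟨G, hGT, g, hg, rfl⟩
  choose f' hf'm hf'e using fun (k : ℤ) (hk : k ∈ F) =>
    (MeasurableSpace.measurableSet_comap.1 (hf k hk))
  choose g' hg'm hg'e using fun (k : ℤ) (hk : k ∈ G) =>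
    (MeasurableSpace.measurableSet_comap.1 (hg k hk))
  set ftot : ℤ → Set ℝ := fun k => if hk : k ∈ F then f' k hk else Set.univ with hftot
  set gtot : ℤ → Set ℝ := fun k => if hk : k ∈ G then g' k hk else Set.univ with hgtot
  have heqF : (⋂ k ∈ F, f k) = ⋂ k ∈ F, X k ⁻¹' ftot k := by
    refine Set.iInter₂_congr fun k hk => ?_
    rw [hftot]
    simp only [dif_pos hk]
    exact (hf'e k hk).symm
  have heqG : (⋂ k ∈ G, g k) = ⋂ k ∈ G, X k ⁻¹' gtot k := by
    refine Set.iInter₂_congr fun k hk => ?_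
    rw [hgtot]
    simp only [dif_pos hk]
    exact (hg'e k hk).symm
  rw [heqF, heqG]
  refine hcon F G ftot gtot ?_ ?_ hFS hGT
  · intro k
    rw [hftot]
    by_cases hk : k ∈ F
    · simpa [dif_pos hk] using hf'm k hk
    · simp [dif_neg hk]
  · intro k
    rw [hgtot]
    by_cases hk : k ∈ G
    · simpa [dif_pos hk] using hg'm k hk
    · simp [dif_neg hk]

end Extract
section Utils

set_option linter.unusedSectionVars false

variable {mΩ : MeasurableSpace Ω} (P : Measure Ω) [IsProbabilityMeasure P]

lemma prob_toReal_le_one (s : Set Ω) : (P s).toReal ≤ 1 := by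
  have h : P s ≤ 1 := prob_le_one
  have := ENNReal.toReal_mono (by norm_num : (1 : ℝ≥0∞) ≠ ⊤) h
  simpa using this

lemma preimage_pcs {α β : Type*} (h : α → β) (bb : Bool) (W : Set β) :
    h ⁻¹' pcs bb W = pcs bb (h ⁻¹' W) := by
  cases bb <;> simp [pcs]

lemma arith_prodbound {pD pG η x y : ℝ} (hx : x ≤ pD * pD + η / 2) (hy : y ≤ pG * pG + η / 2)
    (hx0 : 0 ≤ x) (hy0 : 0 ≤ y) (hpD0 : 0 ≤ pD) (hpD1 : pD ≤ 1) (hpG0 : 0 ≤ pG) (hpG1 : pG ≤ 1)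
    (hη0 : 0 ≤ η) (hη1 : η ≤ 1) : x * y ≤ (pD * pG) ^ 2 + 2 * η := by
  have hkey : x * y ≤ (pD * pD + η / 2) * (pG * pG + η / 2) := by
    apply mul_le_mul hx hy hy0
    nlinarith [mul_nonneg hpG0 hpG0]
  have h1 : pD * pD ≤ 1 := by nlinarith
  have h2 : pG * pG ≤ 1 := by nlinarith
  have h3 : η * (pD * pD) ≤ η := by nlinarith
  have h4 : η * (pG * pG) ≤ η := by nlinarith
  have h5 : η * η ≤ η := by nlinarith
  nlinarith [hkey, h3, h4, h5]

lemma arith_final {K c η τ : ℝ} (hK1 : 1 ≤ K) (hKc : 16 ≤ K * c ^ 2) (hc : 0 < c)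
    (hη : η = c ^ 2 / 64) (hτ : τ = K * c / 2) :
    (K / 4 + K ^ 2 * (η / 2)) / τ ^ 2 + (K / 4 + K ^ 2 * (2 * η)) / τ ^ 2 ≤ 1 / 2 := by
  have hτpos : 0 < τ ^ 2 := by rw [hτ]; positivity
  rw [← add_div, div_le_iff₀ hτpos, hη, hτ]
  have hK0 : (0 : ℝ) ≤ K := by linarith
  have hKK : 16 * K ≤ K * (K * c ^ 2) := by
    rw [mul_comm]
    exact mul_le_mul_of_nonneg_left hKc hK0
  nlinarith [hKK, hK1]

end Utils
section Main

set_option linter.unusedSectionVars false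
set_option maxHeartbeats 1000000

lemma mdep_of_tendsto {mΩ : MeasurableSpace Ω} (P : Measure Ω) [IsProbabilityMeasure P]
    (X : ℤ → Ω → ℝ) (hX : ∀ k, Measurable (X k)) (hstat : StrictlyStationary P X)
    (htend : Tendsto (fun n : ℕ => betaStarSeq P X n) atTop (nhds 0)) :
    ∃ m : ℕ, MDependent P X m := by
  classical
  by_contra hno
  push_neg at hno
  -- pick n₁ ≥ 1 with β*(n₁) < 1/2
  obtain ⟨N₀, hN₀⟩ := eventually_atTop.1
    (htend.eventually_lt_const (by norm_num : (0 : ℝ≥0∞) < ENNReal.ofReal (1 / 2)))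
  set n₁ : ℕ := max N₀ 1 with hn₁def
  have hn₁1 : 1 ≤ n₁ := le_max_right _ _
  have hβn₁ : betaStarSeq P X n₁ < ENNReal.ofReal (1 / 2) := hN₀ n₁ (le_max_left _ _)
  -- non-independence at gap n₁
  have hnm := hno (n₁ - 1)
  unfold MDependent at hnm
  push_neg at hnm
  obtain ⟨j, hj⟩ := hnm
  rw [sigmaLE_eq, sigmaGE_eq] at hj
  have hidx : j + ((n₁ - 1 : ℕ) : ℤ) + 1 = j + (n₁ : ℤ) := by omega
  rw [hidx] at hj
  obtain ⟨F, G, f, g, hfm, hgm, hFsub, hGsub, hne⟩ := exists_corr_events P X hX hj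
  set EF : Set Ω := ⋂ k ∈ F, X k ⁻¹' f k with hEFdef
  set EG : Set Ω := ⋂ k ∈ G, X k ⁻¹' g k with hEGdef
  have hEFm : MeasurableSet EF :=
    Finset.measurableSet_biInter _ fun k _ => (hX k) (hfm k)
  have hEGm : MeasurableSet EG :=
    Finset.measurableSet_biInter _ fun k _ => (hX k) (hgm k)
  set c₀ : ℝ := (P (EF ∩ EG)).toReal - (P EF).toReal * (P EG).toReal with hc₀def
  have hc₀ : c₀ ≠ 0 := by
    intro h0
    apply hne
    have h1 : (P (EF ∩ EG)).toReal = (P EF * P EG).toReal := by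
      rw [ENNReal.toReal_mul]
      rw [hc₀def] at h0
      linarith
    exact (ENNReal.toReal_eq_toReal_iff' (measure_ne_top P _)
      (ENNReal.mul_ne_top (measure_ne_top P _) (measure_ne_top P _))).1 h1
  have hFne : F.Nonempty := by
    rcases F.eq_empty_or_nonempty with rfl | h
    · exfalso
      apply hc₀
      rw [hc₀def, hEFdef]
      simp
    · exact h
  have hGne : G.Nonempty := by
    rcases G.eq_empty_or_nonempty with rfl | h
    · exfalso
      apply hc₀
      rw [hc₀def, hEGdef]
      simp
    · exact h
  -- sign normalization
  set sb : Bool := decide (0 < c₀) with hsbdef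
  set D : Set Ω := pcs sb EF with hDdef
  have hDm : MeasurableSet D := by
    rw [hDdef]
    cases sb
    · exact hEFm.compl
    · exact hEFm
  set pD : ℝ := (P D).toReal with hpDdef
  set pG : ℝ := (P EG).toReal with hpGdef
  set r : ℝ := (P (D ∩ EG)).toReal with hrdef
  set c : ℝ := r - pD * pG with hcdef
  have hc : 0 < c := by
    rcases lt_or_gt_of_ne hc₀ with hneg | hpos
    · have hsb : sb = false := by
        rw [hsbdef]
        simp
        linarith
      have hD : D = EFᶜ := by rw [hDdef, hsb]; rfl
      have h1 : (P (EG ∩ EF)).toReal + (P (EG ∩ EFᶜ)).toReal = (P EG).toReal :=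
        toReal_inter_add P EG EF hEFm
      have h2 : (P Dᶜ) = P EF := by rw [hD, compl_compl]
      have h3 : pD = 1 - (P EF).toReal := by
        rw [hpDdef, hD, toReal_compl P EF hEFm]
      have h4 : (P (D ∩ EG)).toReal = (P (EG ∩ EFᶜ)).toReal := by
        rw [hD, Set.inter_comm]
      have h5 : (P (EG ∩ EF)).toReal = (P (EF ∩ EG)).toReal := by rw [Set.inter_comm]
      rw [hcdef, hrdef, h4, h3]
      rw [hc₀def] at hneg
      rw [h5] at h1
      rw [hpGdef]
      nlinarith [h1]
    · have hsb : sb = true := by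
        rw [hsbdef]
        simp
        linarith
      have hD : D = EF := by rw [hDdef, hsb]; rfl
      rw [hcdef, hrdef, hpDdef, hpGdef, hD]
      rw [hc₀def] at hpos
      linarith
  have hr0 : 0 ≤ r := ENNReal.toReal_nonneg
  have hr1 : r ≤ 1 := prob_toReal_le_one P _
  have hpD0 : 0 ≤ pD := ENNReal.toReal_nonneg
  have hpD1 : pD ≤ 1 := prob_toReal_le_one P _
  have hpG0 : 0 ≤ pG := ENNReal.toReal_nonneg
  have hpG1 : pG ≤ 1 := prob_toReal_le_one P _
  have hc1 : c ≤ 1 := by rw [hcdef]; nlinarith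
  -- parameters
  set K : ℕ := ⌈(16 : ℝ) / c ^ 2⌉₊ with hKdef
  have hK0 : 0 < K := Nat.ceil_pos.2 (by positivity)
  have hK1 : (1 : ℝ) ≤ (K : ℝ) := by exact_mod_cast hK0
  have hKc : 16 ≤ (K : ℝ) * c ^ 2 := by
    have h := Nat.le_ceil ((16 : ℝ) / c ^ 2)
    rw [div_le_iff₀ (by positivity)] at h
    calc (16 : ℝ) ≤ (⌈(16 : ℝ) / c ^ 2⌉₊ : ℝ) * c ^ 2 := h
      _ = (K : ℝ) * c ^ 2 := by rw [hKdef]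
  set η : ℝ := c ^ 2 / 64 with hηdef
  have hη : 0 < η := by positivity
  have hη1 : η ≤ 1 := by nlinarith
  obtain ⟨N₁, hN₁⟩ := eventually_atTop.1
    (htend.eventually_lt_const (ENNReal.ofReal_pos.2 hη))
  set N : ℕ := max N₁ n₁ with hNdef
  have hβN : betaStarSeq P X N ≤ ENNReal.ofReal η := (hN₁ N (le_max_left _ _)).le
  have hn₁N : n₁ ≤ N := le_max_right _ _
  have hN1 : 1 ≤ N := le_trans hn₁1 hn₁N
  -- geometry
  have hFGne : (F ∪ G).Nonempty := ⟨hFne.choose, Finset.mem_union_left _ hFne.choose_spec⟩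
  set a : ℤ := (F ∪ G).min' hFGne with hadef
  set b : ℤ := (F ∪ G).max' hFGne with hbdef
  have hFab : ∀ k ∈ F, a ≤ k ∧ k ≤ b := fun k hk =>
    ⟨Finset.min'_le _ _ (Finset.mem_union_left _ hk),
     Finset.le_max' _ _ (Finset.mem_union_left _ hk)⟩
  have hGab : ∀ k ∈ G, a ≤ k ∧ k ≤ b := fun k hk =>
    ⟨Finset.min'_le _ _ (Finset.mem_union_right _ hk),
     Finset.le_max' _ _ (Finset.mem_union_right _ hk)⟩
  have hab : a ≤ b := (hFab _ hFne.choose_spec).1.trans (hFab _ hFne.choose_spec).2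
  set L : ℤ := b - a + N + 1 with hLdef
  have hL : (N : ℤ) + 1 ≤ L := by omega
  have hLpos : 0 < L := by omega
  -- gap computations
  have hgapOuter : ∀ k k' i i' : ℤ, a ≤ k → k ≤ b → a ≤ k' → k' ≤ b → i ≠ i' →
      (N : ℤ) ≤ |(k + i * L) - (k' + i' * L)| := by
    intro k k' i i' h1 h2 h3 h4 hii
    have hu : |k - k'| ≤ b - a := abs_le.2 ⟨by omega, by omega⟩
    have hv : 1 ≤ |i - i'| := Int.one_le_abs (sub_ne_zero.2 hii)
    have h5 : L ≤ |(i - i') * L| := by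
      rw [abs_mul, abs_of_nonneg hLpos.le]
      nlinarith
    have h6 : |(i - i') * L| - |k - k'| ≤ |(k - k') + (i - i') * L| := by
      have h7 := abs_sub_abs_le_abs_sub ((i - i') * L) (-(k - k'))
      rw [abs_neg, sub_neg_eq_add] at h7
      have h8 : (i - i') * L + (k - k') = (k - k') + (i - i') * L := by ring
      rw [h8] at h7
      exact h7
    have h9 : (k + i * L) - (k' + i' * L) = (k - k') + (i - i') * L := by ring
    rw [h9]
    omega
  have hgapInner : ∀ k k' : ℤ, k ≤ j → j + (n₁ : ℤ) ≤ k' → ∀ i : ℤ,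
      (n₁ : ℤ) ≤ |(k + i * L) - (k' + i * L)| := by
    intro k k' h1 h2 i
    have h3 : (k + i * L) - (k' + i * L) = k - k' := by ring
    rw [h3]
    rw [le_abs]
    right
    omega
  -- the events
  set Af : Fin K → Set Ω := fun i => ⋂ k ∈ F, X (k + (i : ℤ) * L) ⁻¹' f k with hAfdef
  set Av : Fin K → Set Ω := fun i => pcs sb (Af i) with hAvdef
  set Bv : Fin K → Set Ω := fun i => ⋂ k ∈ G, X (k + (i : ℤ) * L) ⁻¹' g k with hBvdef
  -- support sets
  set SP : Fin K → Set ℤ := fun i => {z | ∃ k ∈ F, z = k + (i : ℤ) * L} with hSPdef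
  set TP : Fin K → Set ℤ := fun i => {z | ∃ k ∈ G, z = k + (i : ℤ) * L} with hTPdef
  set SS : Set ℤ := {z | ∃ i : Fin K, ∃ k ∈ F, z = k + (i : ℤ) * L} with hSSdef
  set TT : Set ℤ := {z | ∃ i : Fin K, ∃ k ∈ G, z = k + (i : ℤ) * L} with hTTdef
  have hSPsub : ∀ i, SP i ⊆ SS := by
    rintro i z ⟨k, hk, rfl⟩
    exact ⟨i, k, hk, rfl⟩
  have hTPsub : ∀ i, TP i ⊆ TT := by
    rintro i z ⟨k, hk, rfl⟩
    exact ⟨i, k, hk, rfl⟩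
  -- measurability
  have hAf_on : ∀ i : Fin K, MeasurableSet[sigmaOn X (SP i)] (Af i) := by
    intro i
    rw [hAfdef]
    refine Finset.measurableSet_biInter _ fun k hk => ?_
    refine comap_le_sigmaOn X (⟨k, hk, rfl⟩ : k + (i : ℤ) * L ∈ SP i) _ ?_
    exact ⟨f k, hfm k, rfl⟩
  have hAv_on : ∀ i : Fin K, MeasurableSet[sigmaOn X (SP i)] (Av i) := by
    intro i
    rw [hAvdef]
    cases sb
    · exact (hAf_on i).compl
    · exact hAf_on i
  have hBv_on : ∀ i : Fin K, MeasurableSet[sigmaOn X (TP i)] (Bv i) := by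
    intro i
    rw [hBvdef]
    refine Finset.measurableSet_biInter _ fun k hk => ?_
    refine comap_le_sigmaOn X (⟨k, hk, rfl⟩ : k + (i : ℤ) * L ∈ TP i) _ ?_
    exact ⟨g k, hgm k, rfl⟩
  have hAv_SS : ∀ i : Fin K, MeasurableSet[sigmaOn X SS] (Av i) :=
    fun i => sigmaOn_mono X (hSPsub i) _ (hAv_on i)
  have hBv_TT : ∀ i : Fin K, MeasurableSet[sigmaOn X TT] (Bv i) :=
    fun i => sigmaOn_mono X (hTPsub i) _ (hBv_on i)
  have hAvm : ∀ i, MeasurableSet (Av i) := fun i => sigmaOn_le X hX _ _ (hAv_SS i)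
  have hBvm : ∀ i, MeasurableSet (Bv i) := fun i => sigmaOn_le X hX _ _ (hBv_TT i)
  -- stationarity: the shifted probabilities
  set WA : Set (ℤ → ℝ) := ⋂ k ∈ F, (fun y : ℤ → ℝ => y k) ⁻¹' f k with hWAdef
  set WB : Set (ℤ → ℝ) := ⋂ k ∈ G, (fun y : ℤ → ℝ => y k) ⁻¹' g k with hWBdef
  set WD : Set (ℤ → ℝ) := pcs sb WA with hWDdef
  have hWAm : MeasurableSet WA :=
    Finset.measurableSet_biInter _ fun k _ => (measurable_pi_apply k) (hfm k)
  have hWBm : MeasurableSet WB :=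
    Finset.measurableSet_biInter _ fun k _ => (measurable_pi_apply k) (hgm k)
  have hWDm : MeasurableSet WD := by
    rw [hWDdef]
    cases sb
    · exact hWAm.compl
    · exact hWAm
  have idA : ∀ t : ℤ, (fun ω => fun k => X (k + t) ω) ⁻¹' WA
      = ⋂ k ∈ F, X (k + t) ⁻¹' f k := by
    intro t
    rw [hWAdef]
    simp only [Set.preimage_iInter]
    rfl
  have idB : ∀ t : ℤ, (fun ω => fun k => X (k + t) ω) ⁻¹' WB
      = ⋂ k ∈ G, X (k + t) ⁻¹' g k := by
    intro t
    rw [hWBdef]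
    simp only [Set.preimage_iInter]
    rfl
  have idA0 : (fun ω => fun k => X k ω) ⁻¹' WA = EF := by
    rw [hWAdef, hEFdef]
    simp only [Set.preimage_iInter]
    rfl
  have idB0 : (fun ω => fun k => X k ω) ⁻¹' WB = EG := by
    rw [hWBdef, hEGdef]
    simp only [Set.preimage_iInter]
    rfl
  have hPAv : ∀ i : Fin K, (P (Av i)).toReal = pD := by
    intro i
    have h1 : Av i = (fun ω => fun k => X (k + (i : ℤ) * L) ω) ⁻¹' WD := by
      rw [hAvdef, hWDdef, preimage_pcs, idA, hAfdef]
    have h2 : D = (fun ω => fun k => X k ω) ⁻¹' WD := by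
      rw [hDdef, hWDdef, preimage_pcs, idA0]
    rw [hpDdef, h1, h2, shift_measure P X hX hstat hWDm]
  have hPBv : ∀ i : Fin K, (P (Bv i)).toReal = pG := by
    intro i
    have h1 : Bv i = (fun ω => fun k => X (k + (i : ℤ) * L) ω) ⁻¹' WB := by
      rw [hBvdef, idB]
    rw [hpGdef, h1, ← idB0, shift_measure P X hX hstat hWBm]
  have hPABv : ∀ i : Fin K, (P (Av i ∩ Bv i)).toReal = r := by
    intro i
    have h1 : Av i ∩ Bv i = (fun ω => fun k => X (k + (i : ℤ) * L) ω) ⁻¹' (WD ∩ WB) := by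
      rw [Set.preimage_inter]
      rw [hAvdef, hWDdef, preimage_pcs, idA, hAfdef, hBvdef, idB]
    have h2 : D ∩ EG = (fun ω => fun k => X k ω) ⁻¹' (WD ∩ WB) := by
      rw [Set.preimage_inter]
      rw [hDdef, hWDdef, preimage_pcs, idA0, idB0]
    rw [hrdef, h1, h2, shift_measure P X hX hstat (hWDm.inter hWBm)]
  -- covariance bounds between distinct copies
  have covbound : ∀ S' T' : Set ℤ, S'.Nonempty → T'.Nonempty →
      (∀ s ∈ S', ∀ t ∈ T', (N : ℤ) ≤ |s - t|) →
      ∀ U V : Set Ω, MeasurableSet[sigmaOn X S'] U → MeasurableSet[sigmaOn X T'] V →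
      |(P (U ∩ V)).toReal - (P U).toReal * (P V).toReal| ≤ η / 2 := by
    intro S' T' hS' hT' hgap' U V hU hV
    have hdisj : Disjoint S' T' := by
      rw [Set.disjoint_left]
      intro z hz1 hz2
      have h1 := hgap' z hz1 z hz2
      simp only [sub_self, abs_zero] at h1
      omega
    have h1 := abs_cov_le_betaStar P X hX hS' hT' hdisj hgap' hU hV
    have h2 := h1.trans hβN
    have h3 := (ENNReal.ofReal_le_ofReal_iff hη.le).1 h2
    linarith
  have hSPne : ∀ i, (SP i).Nonempty := fun i =>
    ⟨hFne.choose + (i : ℤ) * L, hFne.choose, hFne.choose_spec, rfl⟩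
  have hTPne : ∀ i, (TP i).Nonempty := fun i =>
    ⟨hGne.choose + (i : ℤ) * L, hGne.choose, hGne.choose_spec, rfl⟩
  have hFinZ : ∀ i i' : Fin K, i ≠ i' → ((i : ℤ) : ℤ) ≠ ((i' : ℤ) : ℤ) := by
    intro i i' hii h
    exact hii (Fin.ext (by exact_mod_cast h))
  have hgapSP : ∀ i i' : Fin K, i ≠ i' → ∀ s ∈ SP i, ∀ t ∈ SP i', (N : ℤ) ≤ |s - t| := by
    rintro i i' hii s ⟨k, hk, rfl⟩ t ⟨k', hk', rfl⟩
    exact hgapOuter k k' _ _ (hFab k hk).1 (hFab k hk).2 (hFab k' hk').1 (hFab k' hk').2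
      (hFinZ i i' hii)
  have hgapTP : ∀ i i' : Fin K, i ≠ i' → ∀ s ∈ TP i, ∀ t ∈ TP i', (N : ℤ) ≤ |s - t| := by
    rintro i i' hii s ⟨k, hk, rfl⟩ t ⟨k', hk', rfl⟩
    exact hgapOuter k k' _ _ (hGab k hk).1 (hGab k hk).2 (hGab k' hk').1 (hGab k' hk').2
      (hFinZ i i' hii)
  have hgapUP : ∀ i i' : Fin K, i ≠ i' →
      ∀ s ∈ SP i ∪ TP i, ∀ t ∈ SP i' ∪ TP i', (N : ℤ) ≤ |s - t| := by
    rintro i i' hii s hs t ht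
    have hs' : ∃ k : ℤ, (a ≤ k ∧ k ≤ b) ∧ s = k + (i : ℤ) * L := by
      rcases hs with ⟨k, hk, rfl⟩ | ⟨k, hk, rfl⟩
      · exact ⟨k, hFab k hk, rfl⟩
      · exact ⟨k, hGab k hk, rfl⟩
    have ht' : ∃ k : ℤ, (a ≤ k ∧ k ≤ b) ∧ t = k + (i' : ℤ) * L := by
      rcases ht with ⟨k, hk, rfl⟩ | ⟨k, hk, rfl⟩
      · exact ⟨k, hFab k hk, rfl⟩
      · exact ⟨k, hGab k hk, rfl⟩
    obtain ⟨k, ⟨h1, h2⟩, rfl⟩ := hs'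
    obtain ⟨k', ⟨h3, h4⟩, rfl⟩ := ht'
    exact hgapOuter k k' _ _ h1 h2 h3 h4 (hFinZ i i' hii)
  have hcovA : ∀ i i' : Fin K, i ≠ i' →
      |(P (Av i ∩ Av i')).toReal - pD * pD| ≤ η / 2 := by
    intro i i' hii
    have h := covbound (SP i) (SP i') (hSPne i) (hSPne i') (hgapSP i i' hii)
      (Av i) (Av i') (hAv_on i) (hAv_on i')
    rwa [hPAv i, hPAv i'] at h
  have hcovB : ∀ i i' : Fin K, i ≠ i' →
      |(P (Bv i ∩ Bv i')).toReal - pG * pG| ≤ η / 2 := by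
    intro i i' hii
    have h := covbound (TP i) (TP i') (hTPne i) (hTPne i') (hgapTP i i' hii)
      (Bv i) (Bv i') (hBv_on i) (hBv_on i')
    rwa [hPBv i, hPBv i'] at h
  have hcovAB : ∀ i i' : Fin K, i ≠ i' →
      |(P ((Av i ∩ Bv i) ∩ (Av i' ∩ Bv i'))).toReal - r * r| ≤ η / 2 := by
    intro i i' hii
    have hU : MeasurableSet[sigmaOn X (SP i ∪ TP i)] (Av i ∩ Bv i) :=
      ((sigmaOn_mono X Set.subset_union_left _ (hAv_on i)).inter
        (sigmaOn_mono X Set.subset_union_right _ (hBv_on i)))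
    have hV : MeasurableSet[sigmaOn X (SP i' ∪ TP i')] (Av i' ∩ Bv i') :=
      ((sigmaOn_mono X Set.subset_union_left _ (hAv_on i')).inter
        (sigmaOn_mono X Set.subset_union_right _ (hBv_on i')))
    have h := covbound (SP i ∪ TP i) (SP i' ∪ TP i')
      ((hSPne i).mono Set.subset_union_left) ((hSPne i').mono Set.subset_union_left)
      (hgapUP i i' hii) _ _ hU hV
    rwa [hPABv i, hPABv i'] at h
  -- Chebyshev, joint side
  set w : ((Fin K → Bool) × (Fin K → Bool)) → ℝ :=
    fun st => (P (cellOf Av st.1 ∩ cellOf Bv st.2)).toReal with hwdef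
  set w' : ((Fin K → Bool) × (Fin K → Bool)) → ℝ :=
    fun st => (P (cellOf Av st.1)).toReal * (P (cellOf Bv st.2)).toReal with hw'def
  set τ : ℝ := (K : ℝ) * c / 2 with hτdef
  have hτ : 0 < τ := by rw [hτdef]; positivity
  set θ : ℝ := (K : ℝ) * (r + pD * pG) / 2 with hθdef
  set QE : ((Fin K → Bool) × (Fin K → Bool)) → Prop :=
    fun st => θ ≤ ∑ i, chiJ i st with hQEdef
  have hθr : θ - (K : ℝ) * r = -τ := by rw [hθdef, hτdef, hcdef]; ring
  have hθρ : θ - (K : ℝ) * (pD * pG) = τ := by rw [hθdef, hτdef, hcdef]; ring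
  have hw0 : ∀ st, 0 ≤ w st := fun st => ENNReal.toReal_nonneg
  have hw1 : ∑ st, w st = 1 := by
    simp only [hwdef]
    exact sum_cell_one P Av Bv hAvm hBvm
  have hmeanP : ∀ i, ∑ st, w st * chiJ i st = r := by
    intro i
    simp only [hwdef]
    rw [moment_one P Av Bv hAvm hBvm i, hPABv i]
  have hpairP : ∀ i i' : Fin K, i ≠ i' →
      ∑ st, w st * (chiJ i st * chiJ i' st) ≤ r ^ 2 + η / 2 := by
    intro i i' hii
    simp only [hwdef]
    rw [moment_two P Av Bv hAvm hBvm i i']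
    have h2 := (abs_le.1 (hcovAB i i' hii)).2
    nlinarith [h2]
  have hQP : ∀ st, (¬ QE st) → τ ≤ |(∑ i, chiJ i st) - (K : ℝ) * r| := by
    intro st hst
    rw [hQEdef] at hst
    push_neg at hst
    rw [le_abs]
    right
    linarith [hθr]
  have chebP := cheb w hw0 hw1 hτ hr0 hr1 (by positivity : (0:ℝ) ≤ η/2) hmeanP hpairP
    (fun st => ¬ QE st) hQP
  -- Chebyshev, product side
  have hw0' : ∀ st, 0 ≤ w' st := fun st =>
    mul_nonneg ENNReal.toReal_nonneg ENNReal.toReal_nonneg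
  have hw1' : ∑ st, w' st = 1 := by
    simp only [hw'def]
    have h1 : ∑ st : (Fin K → Bool) × (Fin K → Bool),
        (P (cellOf Av st.1)).toReal * (P (cellOf Bv st.2)).toReal
        = (∑ s : Fin K → Bool, (P (cellOf Av s)).toReal)
          * (∑ t : Fin K → Bool, (P (cellOf Bv t)).toReal) := by
      rw [Fintype.sum_prod_type, Finset.sum_mul_sum]
    rw [h1, sum_cell_one' P Av hAvm, sum_cell_one' P Bv hBvm, mul_one]
  have hmean' : ∀ i, ∑ st, w' st * chiJ i st = pD * pG := by
    intro i
    simp only [hw'def]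
    have h1 : ∑ st : (Fin K → Bool) × (Fin K → Bool),
        (P (cellOf Av st.1)).toReal * (P (cellOf Bv st.2)).toReal * chiJ i st
        = (∑ s : Fin K → Bool, (P (cellOf Av s)).toReal * (if s i = true then (1:ℝ) else 0))
          * (∑ t : Fin K → Bool, (P (cellOf Bv t)).toReal
              * (if t i = true then (1:ℝ) else 0)) := by
      rw [Finset.sum_mul_sum, Fintype.sum_prod_type]
      refine Finset.sum_congr rfl fun s _ => Finset.sum_congr rfl fun t _ => ?_
      simp only [chiJ_eq_mul]
      ring
    rw [h1, moment_one' P Av hAvm i, moment_one' P Bv hBvm i, hPAv i, hPBv i]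
  have hpair' : ∀ i i' : Fin K, i ≠ i' →
      ∑ st, w' st * (chiJ i st * chiJ i' st) ≤ (pD * pG) ^ 2 + 2 * η := by
    intro i i' hii
    simp only [hw'def]
    have h1 : ∑ st : (Fin K → Bool) × (Fin K → Bool),
        (P (cellOf Av st.1)).toReal * (P (cellOf Bv st.2)).toReal * (chiJ i st * chiJ i' st)
        = (∑ s : Fin K → Bool, (P (cellOf Av s)).toReal
              * ((if s i = true then (1:ℝ) else 0) * (if s i' = true then (1:ℝ) else 0)))
          * (∑ t : Fin K → Bool, (P (cellOf Bv t)).toReal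
              * ((if t i = true then (1:ℝ) else 0) * (if t i' = true then (1:ℝ) else 0))) := by
      rw [Finset.sum_mul_sum, Fintype.sum_prod_type]
      refine Finset.sum_congr rfl fun s _ => Finset.sum_congr rfl fun t _ => ?_
      simp only [chiJ_eq_mul]
      ring
    rw [h1, moment_two' P Av hAvm i i', moment_two' P Bv hBvm i i']
    have hA2 := (abs_le.1 (hcovA i i' hii)).2
    have hB2 := (abs_le.1 (hcovB i i' hii)).2
    have hA0 : 0 ≤ (P (Av i ∩ Av i')).toReal := ENNReal.toReal_nonneg
    have hB0 : 0 ≤ (P (Bv i ∩ Bv i')).toReal := ENNReal.toReal_nonneg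
    exact arith_prodbound (by linarith) (by linarith) hA0 hB0 hpD0 hpD1 hpG0 hpG1 hη.le hη1
  have hρ0 : 0 ≤ pD * pG := mul_nonneg hpD0 hpG0
  have hρ1 : pD * pG ≤ 1 := by nlinarith
  have hQ' : ∀ st, QE st → τ ≤ |(∑ i, chiJ i st) - (K : ℝ) * (pD * pG)| := by
    intro st hst
    rw [hQEdef] at hst
    rw [le_abs]
    left
    linarith [hθρ]
  have chebQ := cheb w' hw0' hw1' hτ hρ0 hρ1 (by positivity : (0:ℝ) ≤ 2*η) hmean' hpair' QE hQ'
  -- combine the two Chebyshev bounds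
  have hbound1 : ((K : ℝ) / 4 + (K : ℝ) ^ 2 * (η / 2)) / τ ^ 2
      + ((K : ℝ) / 4 + (K : ℝ) ^ 2 * (2 * η)) / τ ^ 2 ≤ 1 / 2 :=
    arith_final hK1 hKc hc hηdef hτdef
  have hsplitw := Finset.sum_filter_add_sum_filter_not Finset.univ QE w
  have hEx : 1 / 2 ≤ ∑ st ∈ Finset.univ.filter QE, (w st - w' st) := by
    rw [Finset.sum_sub_distrib]
    linarith [chebP, chebQ, hsplitw, hw1, hbound1]
  have habs : 1 ≤ ∑ st : (Fin K → Bool) × (Fin K → Bool), |w st - w' st| := by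
    have h0 : ∑ st : (Fin K → Bool) × (Fin K → Bool), (w st - w' st) = 0 := by
      rw [Finset.sum_sub_distrib, hw1, hw1']
      ring
    have hsplitx := Finset.sum_filter_add_sum_filter_not Finset.univ QE
      (fun st => w st - w' st)
    have hsplita := Finset.sum_filter_add_sum_filter_not Finset.univ QE
      (fun st => |w st - w' st|)
    have h1 : ∑ st ∈ Finset.univ.filter QE, (w st - w' st)
        ≤ ∑ st ∈ Finset.univ.filter QE, |w st - w' st| :=
      Finset.sum_le_sum fun st _ => le_abs_self _
    have h2 : - ∑ st ∈ Finset.univ.filter (fun st => ¬ QE st), (w st - w' st)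
        ≤ ∑ st ∈ Finset.univ.filter (fun st => ¬ QE st), |w st - w' st| := by
      rw [← Finset.sum_neg_distrib]
      exact Finset.sum_le_sum fun st _ => neg_le_abs _
    linarith [hEx, h1, h2, hsplitx, hsplita, h0]
  -- the partitions
  set I : ℕ := Fintype.card (Fin K → Bool) with hIdef
  set e : (Fin K → Bool) ≃ Fin I := Fintype.equivFin (Fin K → Bool) with hedef
  set PA : Fin I → Set Ω := fun ii => cellOf Av (e.symm ii) with hPAdef
  set PB : Fin I → Set Ω := fun ii => cellOf Bv (e.symm ii) with hPBdef
  have hPApart : IsPartition (sigmaOn X SS) PA := by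
    refine ⟨fun ii => measurableSet_cellOf hAv_SS _,
      fun ii jj hii => cellOf_disjoint fun h => hii (e.symm.injective h), ?_⟩
    rw [Set.iUnion_eq_univ_iff]
    intro ω
    refine ⟨e (sigf Av ω), ?_⟩
    rw [hPAdef]
    simp only [Equiv.symm_apply_apply]
    exact mem_cellOf_sigf ω
  have hPBpart : IsPartition (sigmaOn X TT) PB := by
    refine ⟨fun ii => measurableSet_cellOf hBv_TT _,
      fun ii jj hii => cellOf_disjoint fun h => hii (e.symm.injective h), ?_⟩
    rw [Set.iUnion_eq_univ_iff]
    intro ω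
    refine ⟨e (sigf Bv ω), ?_⟩
    rw [hPBdef]
    simp only [Equiv.symm_apply_apply]
    exact mem_cellOf_sigf ω
  -- reindex the partition sum
  have hsums : ∑ ii : Fin I, ∑ jj : Fin I,
      |(P (PA ii ∩ PB jj)).toReal - (P (PA ii)).toReal * (P (PB jj)).toReal|
      = ∑ st : (Fin K → Bool) × (Fin K → Bool), |w st - w' st| := by
    have h1 : ∀ s : Fin K → Bool, ∑ jj : Fin I,
        |(P (cellOf Av s ∩ cellOf Bv (e.symm jj))).toReal
          - (P (cellOf Av s)).toReal * (P (cellOf Bv (e.symm jj))).toReal|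
        = ∑ t : Fin K → Bool,
        |(P (cellOf Av s ∩ cellOf Bv t)).toReal
          - (P (cellOf Av s)).toReal * (P (cellOf Bv t)).toReal| := by
      intro s
      exact Equiv.sum_comp e.symm (fun t => |(P (cellOf Av s ∩ cellOf Bv t)).toReal
        - (P (cellOf Av s)).toReal * (P (cellOf Bv t)).toReal|)
    calc ∑ ii : Fin I, ∑ jj : Fin I,
        |(P (PA ii ∩ PB jj)).toReal - (P (PA ii)).toReal * (P (PB jj)).toReal|
        = ∑ ii : Fin I, ∑ t : Fin K → Bool,
          |(P (cellOf Av (e.symm ii) ∩ cellOf Bv t)).toReal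
            - (P (cellOf Av (e.symm ii))).toReal * (P (cellOf Bv t)).toReal| := by
          refine Finset.sum_congr rfl fun ii _ => ?_
          rw [hPAdef, hPBdef]
          exact h1 (e.symm ii)
      _ = ∑ s : Fin K → Bool, ∑ t : Fin K → Bool,
          |(P (cellOf Av s ∩ cellOf Bv t)).toReal
            - (P (cellOf Av s)).toReal * (P (cellOf Bv t)).toReal| :=
          Equiv.sum_comp e.symm (fun s => ∑ t : Fin K → Bool,
            |(P (cellOf Av s ∩ cellOf Bv t)).toReal
              - (P (cellOf Av s)).toReal * (P (cellOf Bv t)).toReal|)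
      _ = ∑ st : (Fin K → Bool) × (Fin K → Bool), |w st - w' st| := by
          simp only [hwdef, hw'def]
          rw [Fintype.sum_prod_type]
  -- conclusion
  have hSSne : SS.Nonempty :=
    ⟨hFne.choose + ((⟨0, hK0⟩ : Fin K) : ℤ) * L, ⟨0, hK0⟩, hFne.choose, hFne.choose_spec, rfl⟩
  have hTTne : TT.Nonempty :=
    ⟨hGne.choose + ((⟨0, hK0⟩ : Fin K) : ℤ) * L, ⟨0, hK0⟩, hGne.choose, hGne.choose_spec, rfl⟩
  have hgapST : ∀ s ∈ SS, ∀ t ∈ TT, (n₁ : ℤ) ≤ |s - t| := by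
    rintro s ⟨i, k, hk, rfl⟩ t ⟨i', k', hk', rfl⟩
    by_cases hii : ((i : ℤ)) = ((i' : ℤ))
    · rw [hii]
      exact hgapInner k k' (hFsub hk) (hGsub hk') _
    · have h := hgapOuter k k' _ _ (hFab k hk).1 (hFab k hk).2 (hGab k' hk').1
        (hGab k' hk').2 hii
      have h2 : (n₁ : ℤ) ≤ (N : ℤ) := by exact_mod_cast hn₁N
      omega
  have hdisjST : Disjoint SS TT := by
    rw [Set.disjoint_left]
    intro z hz1 hz2
    have h := hgapST z hz1 z hz2
    simp only [sub_self, abs_zero] at h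
    omega
  have hhalf_le : ENNReal.ofReal (1 / 2) ≤ betaStarSeq P X n₁ := by
    calc ENNReal.ofReal (1 / 2 : ℝ)
        ≤ ENNReal.ofReal ((1 / 2) * ∑ ii : Fin I, ∑ jj : Fin I,
            |(P (PA ii ∩ PB jj)).toReal - (P (PA ii)).toReal * (P (PB jj)).toReal|) := by
          apply ENNReal.ofReal_le_ofReal
          rw [hsums]
          linarith [habs]
      _ ≤ betaDep P (sigmaOn X SS) (sigmaOn X TT) := le_betaDep P hPApart hPBpart
      _ ≤ betaStarSeq P X n₁ := le_betaStarSeq P X hSSne hTTne hdisjST hgapST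
  exact absurd hβn₁ (not_lt.2 hhalf_le)

end Main

/-- for a strictly stationary sequence, `β*(n) → 0` iff the sequence is
`m`-dependent for some `m ≥ 0`. -/
theorem betaStar_tendsto_zero_iff_mDependent
    {Ω : Type*} {mΩ : MeasurableSpace Ω} (P : Measure Ω) [IsProbabilityMeasure P]
    (X : ℤ → Ω → ℝ) (hX : ∀ k, Measurable (X k)) (hstat : StrictlyStationary P X) :
    Tendsto (fun n : ℕ => betaStarSeq P X n) atTop (nhds 0) ↔
      ∃ m : ℕ, MDependent P X m := by
  constructor
  · exact fun h => mdep_of_tendsto P X hX hstat h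
  · rintro ⟨m, hmd⟩
    exact tendsto_of_mdep P X hX hmd

end StrongMixing
end
end
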